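/- arXiv:1605.06723 — 4 statements merged into one kernel-verified Lean document; each statement's English description precedes it below -/
import Mathlib

section
/- For 0 < α < n and γ > 0, the Bessel-Riesz kernel K_{α,γ}(x) = |x|^{α-n}/(1+|x|)^γ belongs to L^t(ℝ^n) whenever n/(n+γ-α) < t < n/(n-α). -/
open MeasureTheory Metric ENNReal Set

noncomputable section

abbrev En (n : ℕ) := EuclideanSpace ℝ (Fin n)

/-- The Bessel-Riesz kernel `K_{α,γ}(x) = |x|^{α-n}/(1+|x|)^γ`. -/
def brKernel (n : ℕ) (α γ : ℝ) (x : En n) : ℝ :=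
  ‖x‖ ^ (α - n) / (1 + ‖x‖) ^ γ

/-- The Bessel-Riesz operator `I_{α,γ} f(x) = ∫ K_{α,γ}(x-y) f(y) dy`. -/
def brOp (n : ℕ) (α γ : ℝ) (f : En n → ℝ) (x : En n) : ℝ :=
  ∫ y, brKernel n α γ (x - y) * f y

/-- The Hardy-Littlewood maximal function (sup over balls containing `x`). -/
def maximalFn (n : ℕ) (f : En n → ℝ) (x : En n) : ℝ≥0∞ :=
  ⨆ (a : En n) (r : ℝ) (_ : 0 < r) (_ : x ∈ ball a r),
    (volume (ball a r))⁻¹ * ∫⁻ y in ball a r, ENNReal.ofReal |f y|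

/-- The classical Morrey norm `‖f‖_{L^{p,q}}`. -/
def morreyNorm (n : ℕ) (p q : ℝ) (f : En n → ℝ) : ℝ≥0∞ :=
  ⨆ (r : ℝ) (_ : 0 < r) (a : En n),
    ENNReal.ofReal (r ^ ((n : ℝ) * (1 / q - 1 / p))) *
      (∫⁻ x in ball a r, ENNReal.ofReal (|f x| ^ p)) ^ (1 / p)

/-- The generalized Morrey norm `‖f‖_{L^{p,φ}}`. -/
def gMorreyNorm (n : ℕ) (p : ℝ) (φ : ℝ → ℝ) (f : En n → ℝ) : ℝ≥0∞ :=
  ⨆ (r : ℝ) (_ : 0 < r) (a : En n),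
    (ENNReal.ofReal (φ r))⁻¹ *
      (((ENNReal.ofReal r) ^ (n : ℝ))⁻¹ *
        ∫⁻ x in ball a r, ENNReal.ofReal (|f x| ^ p)) ^ (1 / p)

/-- The generalized Morrey norm for `ℝ≥0∞`-valued functions. -/
def gMorreyNormE (n : ℕ) (p : ℝ) (φ : ℝ → ℝ) (g : En n → ℝ≥0∞) : ℝ≥0∞ :=
  ⨆ (r : ℝ) (_ : 0 < r) (a : En n),
    (ENNReal.ofReal (φ r))⁻¹ *
      (((ENNReal.ofReal r) ^ (n : ℝ))⁻¹ * ∫⁻ x in ball a r, (g x) ^ p) ^ (1 / p)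

lemma finite_lintegral_rpow_norm_ball (n : ℕ) {s : ℝ} (hs0 : s < 0) (hsn : -(n : ℝ) < s) :
    ∫⁻ x in ball (0 : En n) 1, ENNReal.ofReal (‖x‖ ^ s) < ∞ := by
  have hs : s ≠ 0 := hs0.ne
  have hdim : Module.finrank ℝ (En n) = n := finrank_euclideanSpace_fin
  set μ := volume.restrict (ball (0 : En n) 1) with hμ
  have h_meas : Measurable fun x : En n => ‖x‖ ^ s := by fun_prop
  have h_nn : 0 ≤ᵐ[μ] fun x : En n => ‖x‖ ^ s :=
    Filter.Eventually.of_forall fun x => Real.rpow_nonneg (norm_nonneg _) s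
  rw [show (∫⁻ x in ball (0 : En n) 1, ENNReal.ofReal (‖x‖ ^ s)) =
      ∫⁻ x, ENNReal.ofReal (‖x‖ ^ s) ∂μ from rfl,
    lintegral_eq_lintegral_meas_le μ h_nn h_meas.aemeasurable]
  set mB := volume (ball (0 : En n) 1) with hmB
  have hmBfin : mB < ∞ := measure_ball_lt_top
  have hrest : ∀ A : Set (En n), μ A ≤ mB := fun A =>
    (measure_mono (subset_univ A)).trans (by rw [Measure.restrict_apply_univ])
  calc ∫⁻ τ in Ioi (0:ℝ), μ {a | τ ≤ ‖a‖ ^ s}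
      ≤ ∫⁻ τ in Ioc (0:ℝ) 1 ∪ Ioi 1, μ {a | τ ≤ ‖a‖ ^ s} :=
        lintegral_mono_set Ioi_subset_Ioc_union_Ioi
    _ ≤ (∫⁻ τ in Ioc (0:ℝ) 1, μ {a | τ ≤ ‖a‖ ^ s}) + ∫⁻ τ in Ioi (1:ℝ), μ {a | τ ≤ ‖a‖ ^ s} :=
        lintegral_union_le _ _ _
    _ < ∞ := ENNReal.add_lt_top.2 ⟨?_, ?_⟩
  · calc (∫⁻ τ in Ioc (0:ℝ) 1, μ {a | τ ≤ ‖a‖ ^ s}) ≤ ∫⁻ _ in Ioc (0:ℝ) 1, mB :=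
          lintegral_mono fun τ => hrest _
      _ = mB * volume (Ioc (0:ℝ) 1) := setLIntegral_const _ _
      _ < ∞ := ENNReal.mul_lt_top hmBfin (by simp [Real.volume_Ioc])
  · have key : ∀ τ ∈ Ioi (1:ℝ), μ {a | τ ≤ ‖a‖ ^ s}
        ≤ ENNReal.ofReal (τ ^ (1 / s * n)) * mB := by
      intro τ hτ
      have ht1 : (1:ℝ) < τ := hτ
      have ht0 : (0:ℝ) < τ := lt_trans one_pos ht1
      have hr0 : 0 ≤ τ ^ (1 / s) := Real.rpow_nonneg ht0.le _
      have hsub : {a : En n | τ ≤ ‖a‖ ^ s} ⊆ closedBall (0 : En n) (τ ^ (1 / s)) := by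
        intro a ha
        simp only [mem_setOf_eq] at ha
        have hane : a ≠ 0 := by
          rintro rfl
          rw [norm_zero, Real.zero_rpow hs] at ha
          linarith
        have hna : 0 < ‖a‖ := norm_pos_iff.2 hane
        have h2 : (‖a‖ ^ s) ^ (1 / s) ≤ τ ^ (1 / s) :=
          Real.rpow_le_rpow_of_nonpos ht0 ha (by
            exact le_of_lt (div_neg_of_pos_of_neg one_pos hs0))
        rw [← Real.rpow_mul hna.le, mul_one_div_cancel hs, Real.rpow_one] at h2
        simpa [mem_closedBall, dist_zero_right] using h2
      calc μ {a | τ ≤ ‖a‖ ^ s} ≤ μ (closedBall (0 : En n) (τ ^ (1 / s))) :=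
            measure_mono hsub
        _ ≤ volume (closedBall (0 : En n) (τ ^ (1 / s))) := by
            rw [hμ, Measure.restrict_apply measurableSet_closedBall]
            exact measure_mono inter_subset_left
        _ = ENNReal.ofReal ((τ ^ (1 / s)) ^ Module.finrank ℝ (En n)) * mB :=
            Measure.addHaar_closedBall _ _ hr0
        _ = ENNReal.ofReal (τ ^ (1 / s * n)) * mB := by
            rw [hdim]
            congr 2
            rw [← Real.rpow_natCast (τ ^ (1/s)) n, ← Real.rpow_mul ht0.le]
    have he : 1 / s * n < -1 := by
      have h1 : (n:ℝ) + s > 0 := by linarith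
      have h2 : ((n:ℝ) + s) / s < 0 := div_neg_of_pos_of_neg h1 hs0
      have h3 : 1 / s * n + 1 = ((n:ℝ) + s) / s := by field_simp
      linarith
    calc ∫⁻ τ in Ioi (1:ℝ), μ {a | τ ≤ ‖a‖ ^ s}
        ≤ ∫⁻ τ in Ioi (1:ℝ), ENNReal.ofReal (τ ^ (1 / s * n)) * mB := by
          refine setLIntegral_mono' measurableSet_Ioi key
      _ = (∫⁻ τ in Ioi (1:ℝ), ENNReal.ofReal (τ ^ (1 / s * n))) * mB :=
          lintegral_mul_const' _ _ hmBfin.ne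
      _ < ∞ := by
          refine ENNReal.mul_lt_top ?_ hmBfin
          have hInt : IntegrableOn (fun τ : ℝ => τ ^ (1 / s * n)) (Ioi 1) volume :=
            integrableOn_Ioi_rpow_of_lt he one_pos
          have := hInt.2
          rw [HasFiniteIntegral] at this
          refine lt_of_le_of_lt (le_of_eq ?_) this
          refine setLIntegral_congr_fun measurableSet_Ioi ?_
          intro τ hτ
          exact (Real.enorm_eq_ofReal (Real.rpow_nonneg (le_of_lt (lt_trans one_pos hτ)) _)).symm

/-- the Bessel-Riesz kernel belongs to `L^t(ℝ^n)` for
`n/(n+γ-α) < t < n/(n-α)`. -/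
theorem besselRiesz_kernel_memLp (n : ℕ) (hn : 1 ≤ n) (α γ t : ℝ)
    (hα0 : 0 < α) (hαn : α < n) (hγ : 0 < γ)
    (ht1 : (n : ℝ) / ((n : ℝ) + γ - α) < t) (ht2 : t < (n : ℝ) / ((n : ℝ) - α)) :
    MemLp (brKernel n α γ) (ENNReal.ofReal t) volume := by
  have hn0 : (0:ℝ) < n := by exact_mod_cast hn
  have hna : (0:ℝ) < (n:ℝ) - α := by linarith
  have hnga : (0:ℝ) < (n:ℝ) + γ - α := by linarith
  have ht0 : 0 < t := lt_trans (div_pos hn0 hnga) ht1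
  have hdim : Module.finrank ℝ (En n) = n := finrank_euclideanSpace_fin
  have hKmeas : Measurable (brKernel n α γ) := by
    unfold brKernel; fun_prop
  have hKnn : ∀ x : En n, 0 ≤ brKernel n α γ x := fun x =>
    div_nonneg (Real.rpow_nonneg (norm_nonneg _) _) (Real.rpow_nonneg (by positivity) _)
  constructor
  · exact hKmeas.aestronglyMeasurable
  · rw [eLpNorm_eq_lintegral_rpow_enorm_toReal (by simpa using ht0) ofReal_ne_top,
      ENNReal.toReal_ofReal ht0.le]
    refine ENNReal.rpow_lt_top_of_nonneg (by positivity) ?_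
    rw [← lintegral_add_compl (fun x => ‖brKernel n α γ x‖ₑ ^ t)
      (measurableSet_ball (x := (0 : En n)) (ε := 1))]
    refine (ENNReal.add_lt_top.2 ⟨?_, ?_⟩).ne
    · -- inner part : ball 0 1
      have hst0 : (α - n) * t < 0 := mul_neg_of_neg_of_pos (by linarith) ht0
      have hstn : -(n:ℝ) < (α - n) * t := by
        have h := (lt_div_iff₀ hna).mp ht2
        have : (α - (n:ℝ)) * t = -(t * ((n:ℝ) - α)) := by ring
        linarith
      refine lt_of_le_of_lt (lintegral_mono fun x => ?_)
        (finite_lintegral_rpow_norm_ball n hst0 hstn)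
      have h1 : brKernel n α γ x ≤ ‖x‖ ^ (α - n) := by
        refine div_le_self (Real.rpow_nonneg (norm_nonneg _) _) ?_
        exact Real.one_le_rpow (by linarith [norm_nonneg x]) hγ.le
      calc (‖brKernel n α γ x‖ₑ) ^ t
          = ENNReal.ofReal (brKernel n α γ x) ^ t := by
            rw [← Real.enorm_eq_ofReal (hKnn x)]
        _ ≤ ENNReal.ofReal (‖x‖ ^ (α - n)) ^ t :=
            ENNReal.rpow_le_rpow (ENNReal.ofReal_le_ofReal h1) ht0.le
        _ = ENNReal.ofReal (‖x‖ ^ ((α - n) * t)) := by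
            rw [ENNReal.ofReal_rpow_of_nonneg (Real.rpow_nonneg (norm_nonneg _) _) ht0.le,
              ← Real.rpow_mul (norm_nonneg _)]
    · -- outer part : complement of ball 0 1
      set r : ℝ := ((n:ℝ) + γ - α) * t with hr
      have hnr : (Module.finrank ℝ (En n) : ℝ) < r := by
        rw [hdim]
        have h := (div_lt_iff₀ hnga).mp ht1
        nlinarith
      have hC : (0:ℝ) ≤ 2 ^ (((n:ℝ) - α) * t) := Real.rpow_nonneg (by norm_num) _
      have hbound : ∀ x : En n, x ∈ (ball (0 : En n) 1)ᶜ →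
          (‖brKernel n α γ x‖ₑ) ^ t ≤
            ENNReal.ofReal (2 ^ (((n:ℝ) - α) * t) * (1 + ‖x‖) ^ (-r)) := by
        intro x hx
        have hx1 : (1:ℝ) ≤ ‖x‖ := by
          simpa [mem_ball, dist_zero_right] using hx
        have h1x : (0:ℝ) < 1 + ‖x‖ := by linarith
        have hKle : brKernel n α γ x ≤ 2 ^ ((n:ℝ) - α) * (1 + ‖x‖) ^ (α - n - γ) := by
          have hbase : (1 + ‖x‖) / 2 ≤ ‖x‖ := by linarith
          have hhalf : (0:ℝ) < (1 + ‖x‖) / 2 := by linarith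
          have h2 : ‖x‖ ^ (α - n) ≤ ((1 + ‖x‖) / 2) ^ (α - n) :=
            Real.rpow_le_rpow_of_nonpos hhalf hbase (by linarith)
          have h3 : ((1 + ‖x‖) / 2) ^ (α - n) = 2 ^ ((n:ℝ) - α) * (1 + ‖x‖) ^ (α - n) := by
            rw [Real.div_rpow h1x.le (by norm_num : (0:ℝ) ≤ 2), div_eq_mul_inv,
              ← Real.rpow_neg (by norm_num : (0:ℝ) ≤ 2), mul_comm, neg_sub]
          have h4 : brKernel n α γ x = ‖x‖ ^ (α - n) * (1 + ‖x‖) ^ (-γ) := by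
            rw [brKernel, div_eq_mul_inv, ← Real.rpow_neg h1x.le]
          rw [h4]
          calc ‖x‖ ^ (α - n) * (1 + ‖x‖) ^ (-γ)
              ≤ ((1 + ‖x‖) / 2) ^ (α - n) * (1 + ‖x‖) ^ (-γ) :=
                mul_le_mul_of_nonneg_right h2 (Real.rpow_nonneg h1x.le _)
            _ = 2 ^ ((n:ℝ) - α) * ((1 + ‖x‖) ^ (α - n) * (1 + ‖x‖) ^ (-γ)) := by
                rw [h3]; ring
            _ = 2 ^ ((n:ℝ) - α) * (1 + ‖x‖) ^ (α - n - γ) := by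
                rw [← Real.rpow_add h1x]; ring_nf
        calc (‖brKernel n α γ x‖ₑ) ^ t
            = ENNReal.ofReal (brKernel n α γ x) ^ t := by
              rw [← Real.enorm_eq_ofReal (hKnn x)]
          _ ≤ ENNReal.ofReal (2 ^ ((n:ℝ) - α) * (1 + ‖x‖) ^ (α - n - γ)) ^ t :=
              ENNReal.rpow_le_rpow (ENNReal.ofReal_le_ofReal hKle) ht0.le
          _ = ENNReal.ofReal (2 ^ (((n:ℝ) - α) * t) * (1 + ‖x‖) ^ (-r)) := by
              rw [ENNReal.ofReal_rpow_of_nonneg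
                  (mul_nonneg (Real.rpow_nonneg (by norm_num) _)
                    (Real.rpow_nonneg h1x.le _)) ht0.le,
                Real.mul_rpow (Real.rpow_nonneg (by norm_num) _) (Real.rpow_nonneg h1x.le _),
                ← Real.rpow_mul (by norm_num : (0:ℝ) ≤ 2), ← Real.rpow_mul h1x.le]
              congr 2
              rw [hr]; ring
      calc ∫⁻ x in (ball (0 : En n) 1)ᶜ, (‖brKernel n α γ x‖ₑ) ^ t
          ≤ ∫⁻ x in (ball (0 : En n) 1)ᶜ,
              ENNReal.ofReal (2 ^ (((n:ℝ) - α) * t) * (1 + ‖x‖) ^ (-r)) :=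
            setLIntegral_mono' measurableSet_ball.compl hbound
        _ ≤ ∫⁻ x : En n, ENNReal.ofReal (2 ^ (((n:ℝ) - α) * t) * (1 + ‖x‖) ^ (-r)) :=
            setLIntegral_le_lintegral _ _
        _ = ENNReal.ofReal (2 ^ (((n:ℝ) - α) * t)) *
              ∫⁻ x : En n, ENNReal.ofReal ((1 + ‖x‖) ^ (-r)) := by
            simp_rw [ENNReal.ofReal_mul hC]
            exact lintegral_const_mul' _ _ ofReal_ne_top
        _ < ∞ := ENNReal.mul_lt_top ofReal_lt_top (finite_integral_one_add_norm hnr)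
end
end

section
/- Local dyadic estimate: for 0 < α < n, γ > 0, 1 ≤ s, there is a constant C such that for every f ∈ L¹_loc(ℝ^n), every x ∈ ℝ^n and R > 0, ∫_{|x-y|<R} K_{α,γ}(x-y)|f(y)| dy ≤ C · Mf(x) · (∑_{k=-∞}^{-1} (2^k R)^{(α-n)s+n}/(1+2^k R)^{γ s})^{1/s} · R^{n/s'}, where s' is the conjugate exponent of s. -/
open MeasureTheory Metric ENNReal

noncomputable section

/-! ### Auxiliary lemmas -/

/-- The dyadic radius `2^{-k-1} R`. -/
def dyc (R : ℝ) (k : ℕ) : ℝ := (2:ℝ) ^ (-(k:ℤ) - 1) * R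

lemma dyc_pos {R : ℝ} (hR : 0 < R) (k : ℕ) : 0 < dyc R k :=
  mul_pos (zpow_pos (by norm_num) _) hR

lemma dyc_eq (R : ℝ) (k : ℕ) : dyc R k = ((1:ℝ)/2) ^ (k+1) * R := by
  rw [dyc]
  congr 1
  rw [one_div, inv_pow, ← zpow_natCast (2:ℝ) (k+1), ← zpow_neg]
  congr 1; push_cast; ring

lemma dyc_succ (R : ℝ) (k : ℕ) : 2 * dyc R (k+1) = dyc R k := by
  rw [dyc_eq, dyc_eq, ← mul_assoc]
  congr 1
  rw [show (k:ℕ)+1+1 = (k+1)+1 from rfl, pow_succ ((1:ℝ)/2) (k+1)]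
  ring

lemma dyc_zero (R : ℝ) : 2 * dyc R 0 = R := by
  rw [dyc_eq, ← mul_assoc]; norm_num

/-- Dyadic annuli cover the punctured ball. -/
lemma dyadic_cover (n : ℕ) (x : En n) (R : ℝ) (hR : 0 < R) :
    ball x R ⊆ {x} ∪ ⋃ k : ℕ, (ball x (2 * dyc R k) \ ball x (dyc R k)) := by
  intro y hy
  rcases eq_or_ne y x with h | h
  · exact Or.inl h
  · right
    have hd0 : 0 < dist y x := dist_pos.mpr h
    have hdR : dist y x < R := mem_ball.mp hy
    have hex : ∃ k, dyc R k ≤ dist y x := by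
      obtain ⟨m, hm⟩ := exists_pow_lt_of_lt_one (div_pos hd0 hR) (by norm_num : (1:ℝ)/2 < 1)
      refine ⟨m, ?_⟩
      have h2 : ((1:ℝ)/2) ^ (m+1) ≤ ((1:ℝ)/2) ^ m :=
        pow_le_pow_of_le_one (by norm_num) (by norm_num) (Nat.le_succ m)
      have h3 : ((1:ℝ)/2) ^ m * R < dist y x := (lt_div_iff₀ hR).mp hm
      rw [dyc_eq]
      nlinarith [pow_pos (by norm_num : (0:ℝ) < 1/2) m]
    classical
    set k := Nat.find hex with hk
    have hk1 : dyc R k ≤ dist y x := Nat.find_spec hex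
    have hk2 : dist y x < 2 * dyc R k := by
      rcases Nat.eq_zero_or_pos k with hk0 | hkpos
      · rw [hk0, dyc_zero]; exact hdR
      · obtain ⟨m, hm⟩ := Nat.exists_eq_succ_of_ne_zero hkpos.ne'
        have h4 : ¬ dyc R m ≤ dist y x := Nat.find_min hex (by omega : m < k)
        rw [hm, dyc_succ]
        exact not_le.mp h4
    exact Set.mem_iUnion.mpr
      ⟨k, mem_ball.mpr hk2, fun hmem => absurd (mem_ball.mp hmem) (not_lt.mpr hk1)⟩

/-- The key real-number identity relating the dyadic term to the statement's summand. -/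
lemma dyadic_real_ident (n : ℕ) (α γ s R t : ℝ) (hR : 0 < R) (hs0 : 0 < s)
    (htdef : t = (n:ℝ) * (1 - 1/s)) (k : ℕ) :
    (dyc R k ^ (α - (n:ℝ)) / (1 + dyc R k) ^ γ) * (2 * dyc R k) ^ n =
      (2:ℝ) ^ n * ((dyc R k ^ ((α - (n:ℝ)) * s + n) / (1 + dyc R k) ^ (γ * s)) ^ (1/s) *
        ((2:ℝ) ^ (-t)) ^ (k+1)) * R ^ t := by
  set c : ℝ := dyc R k with hcdef0
  have hcdef : c = (2:ℝ) ^ (-(k:ℤ) - 1) * R := by rw [hcdef0, dyc]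
  have hc : (0:ℝ) < c := dyc_pos hR k
  have h1c : (0:ℝ) < 1 + c := by linarith
  have hB : (0:ℝ) < (1 + c) ^ γ := Real.rpow_pos_of_pos h1c _
  have e1 : (c ^ (α - (n:ℝ)) / (1 + c) ^ γ) * (2 * c) ^ n
      = (2:ℝ)^n * (c ^ α / (1 + c) ^ γ) := by
    have h5 : c ^ (α - (n:ℝ)) * c ^ ((n:ℕ):ℝ) = c ^ α := by
      rw [← Real.rpow_add hc]; norm_num
    rw [mul_pow, ← Real.rpow_natCast c n, div_mul_eq_mul_div, ← mul_assoc,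
      mul_comm (c ^ (α - (n:ℝ))) ((2:ℝ)^n), mul_assoc, h5, mul_div_assoc]
  have e3 : (c ^ ((α - (n:ℝ)) * s + n) / (1 + c) ^ (γ * s)) ^ (1/s)
      = c ^ (α - (n:ℝ) + n / s) / (1 + c) ^ γ := by
    rw [Real.div_rpow (Real.rpow_nonneg hc.le _) (Real.rpow_nonneg h1c.le _),
      ← Real.rpow_mul hc.le, ← Real.rpow_mul h1c.le]
    have h6 : ((α - (n:ℝ)) * s + n) * (1/s) = α - (n:ℝ) + n / s := by
      field_simp; try ring
    have h7 : γ * s * (1/s) = γ := by field_simp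
    rw [h6, h7]
  have e4 : ((2:ℝ) ^ (-t)) ^ (k+1) * R ^ t = c ^ t := by
    rw [hcdef, Real.mul_rpow (le_of_lt (zpow_pos (by norm_num) _)) hR.le]
    congr 1
    rw [← Real.rpow_natCast ((2:ℝ) ^ (-t)) (k+1), ← Real.rpow_mul (by norm_num : (0:ℝ) ≤ 2),
      ← Real.rpow_intCast (2:ℝ) (-(k:ℤ) - 1), ← Real.rpow_mul (by norm_num : (0:ℝ) ≤ 2)]
    congr 1
    push_cast
    ring
  have e5 : c ^ (α - (n:ℝ) + n / s) * c ^ t = c ^ α := by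
    rw [← Real.rpow_add hc]
    congr 1
    rw [htdef]
    field_simp
    ring
  rw [e1, e3]
  calc (2:ℝ)^n * (c ^ α / (1 + c) ^ γ)
      = (2:ℝ)^n * ((c ^ (α - (n:ℝ) + n / s) * c ^ t) / (1 + c) ^ γ) := by rw [e5]
    _ = (2:ℝ)^n * (c ^ (α - (n:ℝ) + n / s) / (1 + c) ^ γ * (((2:ℝ) ^ (-t)) ^ (k+1) * R ^ t)) := by
        rw [e4]; ring
    _ = (2:ℝ)^n * (c ^ (α - (n:ℝ) + n / s) / (1 + c) ^ γ * ((2:ℝ) ^ (-t)) ^ (k+1)) * R ^ t := by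
        ring

/-- Summing a geometric-type series against `(1/s)`-powers. -/
lemma sum_rpow_geom_aux (s : ℝ) (hs : 1 ≤ s) (θ : ℝ≥0∞) (hθ1 : θ ≤ 1) (hθlt : s ≠ 1 → θ < 1) :
    ∃ G : ℝ≥0∞, G ≠ 0 ∧ G ≠ ⊤ ∧ ∀ b : ℕ → ℝ≥0∞,
      (∑' k : ℕ, (b k) ^ (1/s) * θ ^ (k+1)) ≤ G * (∑' k : ℕ, b k) ^ (1/s) := by
  have hs0 : (0:ℝ) < s := lt_of_lt_of_le one_pos hs
  by_cases h1 : s = 1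
  · refine ⟨1, one_ne_zero, one_ne_top, fun b => ?_⟩
    subst h1
    rw [one_mul]
    simp only [one_div, inv_one, ENNReal.rpow_one]
    calc (∑' k : ℕ, b k * θ ^ (k+1)) ≤ ∑' k : ℕ, b k * 1 := by
          refine ENNReal.tsum_le_tsum fun k => mul_le_mul_right ?_ _
          calc θ ^ (k+1) ≤ 1 ^ (k+1) := pow_le_pow_left' hθ1 _
            _ = 1 := one_pow _
      _ = ∑' k : ℕ, b k := by simp
  · have hθ : θ < 1 := hθlt h1
    refine ⟨(1 - θ)⁻¹, ?_, ?_, fun b => ?_⟩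
    · simp only [ne_eq, ENNReal.inv_eq_zero]
      exact (lt_of_le_of_lt tsub_le_self one_lt_top).ne
    · rw [ne_eq, ENNReal.inv_eq_top]
      exact (tsub_pos_iff_lt.mpr hθ).ne'
    · calc (∑' k : ℕ, (b k) ^ (1/s) * θ ^ (k+1))
          ≤ ∑' k : ℕ, (∑' j : ℕ, b j) ^ (1/s) * θ ^ (k+1) := by
            refine ENNReal.tsum_le_tsum fun k => mul_le_mul_left ?_ _
            exact ENNReal.rpow_le_rpow (ENNReal.le_tsum k) (by positivity)
        _ = (∑' j : ℕ, b j) ^ (1/s) * ∑' k : ℕ, θ ^ (k+1) := ENNReal.tsum_mul_left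
        _ ≤ (∑' j : ℕ, b j) ^ (1/s) * ∑' k : ℕ, θ ^ k := by
            refine mul_le_mul_right (ENNReal.tsum_le_tsum fun k => ?_) _
            exact pow_le_pow_of_le_one (zero_le (a := θ)) hθ1 (Nat.le_succ k)
        _ = (∑' j : ℕ, b j) ^ (1/s) * (1 - θ)⁻¹ := by rw [ENNReal.tsum_geometric]
        _ = (1 - θ)⁻¹ * (∑' j : ℕ, b j) ^ (1/s) := mul_comm _ _

/-- local dyadic estimate for the Bessel-Riesz kernel via
the Hardy-Littlewood maximal function. -/
theorem besselRiesz_local_dyadic (n : ℕ) (hn : 1 ≤ n) (α γ s : ℝ)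
    (hα0 : 0 < α) (hαn : α < n) (hγ : 0 < γ) (hs : 1 ≤ s) :
    ∃ C > (0 : ℝ), ∀ f : En n → ℝ, LocallyIntegrable f volume →
      ∀ x : En n, ∀ R : ℝ, 0 < R →
        (∫⁻ y in ball x R, ENNReal.ofReal (brKernel n α γ (x - y) * |f y|)) ≤
          ENNReal.ofReal C * maximalFn n f x *
            (∑' k : ℕ, ENNReal.ofReal
              (((2 : ℝ) ^ (-(k : ℤ) - 1) * R) ^ ((α - n) * s + n) /
                (1 + (2 : ℝ) ^ (-(k : ℤ) - 1) * R) ^ (γ * s))) ^ (1 / s) *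
            ENNReal.ofReal (R ^ ((n : ℝ) * (1 - 1 / s))) := by
  have hs0 : (0:ℝ) < s := lt_of_lt_of_le one_pos hs
  have hn1 : (1:ℝ) ≤ n := by exact_mod_cast hn
  haveI : Nonempty (Fin n) := ⟨⟨0, hn⟩⟩
  haveI : Nontrivial (En n) := inferInstance
  set t : ℝ := (n:ℝ) * (1 - 1/s) with htdef
  have hs1' : 1/s ≤ 1 := by rw [div_le_one hs0]; exact hs
  have ht0 : 0 ≤ t := mul_nonneg (by linarith) (by linarith)
  have hθ1 : ENNReal.ofReal ((2:ℝ) ^ (-t)) ≤ 1 := by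
    rw [ENNReal.ofReal_le_one]
    exact Real.rpow_le_one_of_one_le_of_nonpos one_le_two (neg_nonpos.mpr ht0)
  have hθlt : s ≠ 1 → ENNReal.ofReal ((2:ℝ) ^ (-t)) < 1 := by
    intro h1
    have hslt : 1 < s := lt_of_le_of_ne hs (Ne.symm h1)
    have htpos : 0 < t := by
      have h2 : 1/s < 1 := by rw [div_lt_one hs0]; exact hslt
      rw [htdef]
      exact _root_.mul_pos (by linarith) (by linarith)
    rw [ENNReal.ofReal_lt_one]
    exact Real.rpow_lt_one_of_one_lt_of_neg one_lt_two (neg_lt_zero.mpr htpos)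
  obtain ⟨G, hG0, hGt, hG⟩ := sum_rpow_geom_aux s hs _ hθ1 hθlt
  have hv0 : volume (ball (0:En n) 1) ≠ 0 := (measure_ball_pos volume _ one_pos).ne'
  have hvt : volume (ball (0:En n) 1) ≠ ⊤ := measure_ball_lt_top.ne
  have h2n : (0:ℝ) < (2:ℝ)^n := by positivity
  set D : ℝ≥0∞ := volume (ball (0:En n) 1) * ENNReal.ofReal ((2:ℝ)^n) * G with hDdef
  have hD0 : D ≠ 0 := by
    rw [hDdef]
    exact mul_ne_zero (mul_ne_zero hv0 (ENNReal.ofReal_pos.mpr h2n).ne') hG0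
  have hDt : D ≠ ⊤ := by
    rw [hDdef]
    exact ENNReal.mul_ne_top (ENNReal.mul_ne_top hvt ENNReal.ofReal_ne_top) hGt
  refine ⟨D.toReal, ENNReal.toReal_pos hD0 hDt, ?_⟩
  intro f hf x R hR
  rw [ENNReal.ofReal_toReal hDt]
  -- rewrite the statement's tsum in terms of `dyc`
  have hrw : (∑' k : ℕ, ENNReal.ofReal
        (((2 : ℝ) ^ (-(k : ℤ) - 1) * R) ^ ((α - n) * s + n) /
          (1 + (2 : ℝ) ^ (-(k : ℤ) - 1) * R) ^ (γ * s))) =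
      ∑' k : ℕ, ENNReal.ofReal
        (dyc R k ^ ((α - (n:ℝ)) * s + n) / (1 + dyc R k) ^ (γ * s)) := by
    simp only [dyc]
  rw [hrw]
  -- maximal function bound for balls centered at x
  have hmax : ∀ r : ℝ, 0 < r → (∫⁻ y in ball x r, ENNReal.ofReal |f y|) ≤
      maximalFn n f x * volume (ball x r) := by
    intro r hr
    have h0 : volume (ball x r) ≠ 0 := (measure_ball_pos volume x hr).ne'
    have htop : volume (ball x r) ≠ ⊤ := measure_ball_lt_top.ne
    have h1 : (volume (ball x r))⁻¹ * ∫⁻ y in ball x r, ENNReal.ofReal |f y| ≤ maximalFn n f x :=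
      le_iSup_of_le x (le_iSup_of_le r (le_iSup_of_le hr (le_iSup_of_le (mem_ball_self hr) le_rfl)))
    calc (∫⁻ y in ball x r, ENNReal.ofReal |f y|)
        = volume (ball x r) * ((volume (ball x r))⁻¹ * ∫⁻ y in ball x r, ENNReal.ofReal |f y|) := by
          rw [← mul_assoc, ENNReal.mul_inv_cancel h0 htop, one_mul]
      _ ≤ volume (ball x r) * maximalFn n f x := mul_le_mul_right h1 _
      _ = maximalFn n f x * volume (ball x r) := mul_comm _ _
  -- per-annulus estimate
  have hterm : ∀ k : ℕ,
      (∫⁻ y in ball x (2 * dyc R k) \ ball x (dyc R k),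
        ENNReal.ofReal (brKernel n α γ (x - y) * |f y|)) ≤
      (maximalFn n f x * volume (ball (0:En n) 1)) *
        ENNReal.ofReal ((dyc R k ^ (α - (n:ℝ)) / (1 + dyc R k) ^ γ) * (2 * dyc R k) ^ n) := by
    intro k
    have hc : (0:ℝ) < dyc R k := dyc_pos hR k
    have h1c : (0:ℝ) < 1 + dyc R k := by linarith
    have hann : (0:ℝ) ≤ dyc R k ^ (α - (n:ℝ)) / (1 + dyc R k) ^ γ :=
      div_nonneg (Real.rpow_nonneg hc.le _) (Real.rpow_nonneg h1c.le _)
    have hAmeas : MeasurableSet (ball x (2 * dyc R k) \ ball x (dyc R k)) :=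
      measurableSet_ball.diff measurableSet_ball
    have hb : ∀ y ∈ ball x (2 * dyc R k) \ ball x (dyc R k),
        ENNReal.ofReal (brKernel n α γ (x - y) * |f y|) ≤
          ENNReal.ofReal (dyc R k ^ (α - (n:ℝ)) / (1 + dyc R k) ^ γ) * ENNReal.ofReal |f y| := by
      intro y hy
      have hyd : dyc R k ≤ dist y x := not_lt.mp (fun hcon => hy.2 (mem_ball.mpr hcon))
      have hnorm : dyc R k ≤ ‖x - y‖ := by
        rw [norm_sub_rev, ← dist_eq_norm]
        exact hyd
      have h1 : ‖x - y‖ ^ (α - (n:ℝ)) ≤ dyc R k ^ (α - (n:ℝ)) :=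
        Real.rpow_le_rpow_of_nonpos hc hnorm (by linarith)
      have h2 : (1 + dyc R k) ^ γ ≤ (1 + ‖x - y‖) ^ γ :=
        Real.rpow_le_rpow (by linarith) (by linarith) hγ.le
      have hker : brKernel n α γ (x - y) ≤ dyc R k ^ (α - (n:ℝ)) / (1 + dyc R k) ^ γ := by
        simp only [brKernel]
        exact div_le_div₀ (Real.rpow_nonneg hc.le _) h1 (Real.rpow_pos_of_pos h1c _) h2
      calc ENNReal.ofReal (brKernel n α γ (x - y) * |f y|)
          ≤ ENNReal.ofReal ((dyc R k ^ (α - (n:ℝ)) / (1 + dyc R k) ^ γ) * |f y|) :=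
            ENNReal.ofReal_le_ofReal (mul_le_mul_of_nonneg_right hker (abs_nonneg _))
        _ = _ := ENNReal.ofReal_mul hann
    calc (∫⁻ y in ball x (2 * dyc R k) \ ball x (dyc R k),
            ENNReal.ofReal (brKernel n α γ (x - y) * |f y|))
        ≤ ∫⁻ y in ball x (2 * dyc R k) \ ball x (dyc R k),
            ENNReal.ofReal (dyc R k ^ (α - (n:ℝ)) / (1 + dyc R k) ^ γ) * ENNReal.ofReal |f y| :=
          lintegral_mono_ae ((ae_restrict_iff' hAmeas).mpr (ae_of_all _ hb))
      _ = ENNReal.ofReal (dyc R k ^ (α - (n:ℝ)) / (1 + dyc R k) ^ γ) *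
            ∫⁻ y in ball x (2 * dyc R k) \ ball x (dyc R k), ENNReal.ofReal |f y| :=
          lintegral_const_mul' _ _ ENNReal.ofReal_ne_top
      _ ≤ ENNReal.ofReal (dyc R k ^ (α - (n:ℝ)) / (1 + dyc R k) ^ γ) *
            ∫⁻ y in ball x (2 * dyc R k), ENNReal.ofReal |f y| :=
          mul_le_mul_right (lintegral_mono_set Set.diff_subset) _
      _ ≤ ENNReal.ofReal (dyc R k ^ (α - (n:ℝ)) / (1 + dyc R k) ^ γ) *
            (maximalFn n f x * volume (ball x (2 * dyc R k))) :=
          mul_le_mul_right (hmax _ (by linarith)) _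
      _ = (maximalFn n f x * volume (ball (0:En n) 1)) *
            ENNReal.ofReal ((dyc R k ^ (α - (n:ℝ)) / (1 + dyc R k) ^ γ) * (2 * dyc R k) ^ n) := by
          rw [Measure.addHaar_ball volume x (by linarith : (0:ℝ) ≤ 2 * dyc R k),
            finrank_euclideanSpace_fin, ENNReal.ofReal_mul hann]
          ring
  -- per-term identity in ℝ≥0∞
  have hident : ∀ k : ℕ,
      ENNReal.ofReal ((dyc R k ^ (α - (n:ℝ)) / (1 + dyc R k) ^ γ) * (2 * dyc R k) ^ n) =
      (ENNReal.ofReal ((2:ℝ)^n) * ENNReal.ofReal (R ^ t)) *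
        ((ENNReal.ofReal (dyc R k ^ ((α - (n:ℝ)) * s + n) / (1 + dyc R k) ^ (γ * s))) ^ (1/s) *
          (ENNReal.ofReal ((2:ℝ) ^ (-t))) ^ (k+1)) := by
    intro k
    have hc : (0:ℝ) < dyc R k := dyc_pos hR k
    have h1c : (0:ℝ) < 1 + dyc R k := by linarith
    have hbnn : (0:ℝ) ≤ dyc R k ^ ((α - (n:ℝ)) * s + n) / (1 + dyc R k) ^ (γ * s) :=
      div_nonneg (Real.rpow_nonneg hc.le _) (Real.rpow_nonneg h1c.le _)
    have hθnn : (0:ℝ) ≤ (2:ℝ) ^ (-t) := Real.rpow_nonneg (by norm_num) _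
    have hXnn : (0:ℝ) ≤ (dyc R k ^ ((α - (n:ℝ)) * s + n) / (1 + dyc R k) ^ (γ * s)) ^ (1/s) *
        ((2:ℝ) ^ (-t)) ^ (k+1) :=
      mul_nonneg (Real.rpow_nonneg hbnn _) (pow_nonneg hθnn _)
    rw [dyadic_real_ident n α γ s R t hR hs0 htdef k]
    rw [ENNReal.ofReal_mul (mul_nonneg h2n.le hXnn), ENNReal.ofReal_mul h2n.le,
      ENNReal.ofReal_mul (Real.rpow_nonneg hbnn _),
      ENNReal.ofReal_rpow_of_nonneg hbnn (by positivity : (0:ℝ) ≤ 1/s),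
      ENNReal.ofReal_pow hθnn]
    ring
  -- assemble
  calc (∫⁻ y in ball x R, ENNReal.ofReal (brKernel n α γ (x - y) * |f y|))
      ≤ ∫⁻ y in ({x} ∪ ⋃ k : ℕ, (ball x (2 * dyc R k) \ ball x (dyc R k))),
          ENNReal.ofReal (brKernel n α γ (x - y) * |f y|) :=
        lintegral_mono_set (dyadic_cover n x R hR)
    _ ≤ (∫⁻ y in ({x} : Set (En n)), ENNReal.ofReal (brKernel n α γ (x - y) * |f y|)) +
          ∫⁻ y in (⋃ k : ℕ, (ball x (2 * dyc R k) \ ball x (dyc R k))),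
            ENNReal.ofReal (brKernel n α γ (x - y) * |f y|) :=
        lintegral_union_le _ _ _
    _ = ∫⁻ y in (⋃ k : ℕ, (ball x (2 * dyc R k) \ ball x (dyc R k))),
          ENNReal.ofReal (brKernel n α γ (x - y) * |f y|) := by
        rw [setLIntegral_measure_zero _ _ (measure_singleton x), zero_add]
    _ ≤ ∑' k : ℕ, ∫⁻ y in (ball x (2 * dyc R k) \ ball x (dyc R k)),
          ENNReal.ofReal (brKernel n α γ (x - y) * |f y|) :=
        lintegral_iUnion_le _ _
    _ ≤ ∑' k : ℕ, (maximalFn n f x * volume (ball (0:En n) 1)) *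
          ENNReal.ofReal ((dyc R k ^ (α - (n:ℝ)) / (1 + dyc R k) ^ γ) * (2 * dyc R k) ^ n) :=
        ENNReal.tsum_le_tsum hterm
    _ = ∑' k : ℕ, (maximalFn n f x * volume (ball (0:En n) 1) *
          (ENNReal.ofReal ((2:ℝ)^n) * ENNReal.ofReal (R ^ t))) *
          ((ENNReal.ofReal (dyc R k ^ ((α - (n:ℝ)) * s + n) / (1 + dyc R k) ^ (γ * s))) ^ (1/s) *
            (ENNReal.ofReal ((2:ℝ) ^ (-t))) ^ (k+1)) := by
        refine tsum_congr fun k => ?_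
        rw [hident k]
        ring
    _ = (maximalFn n f x * volume (ball (0:En n) 1) *
          (ENNReal.ofReal ((2:ℝ)^n) * ENNReal.ofReal (R ^ t))) *
          ∑' k : ℕ,
            ((ENNReal.ofReal (dyc R k ^ ((α - (n:ℝ)) * s + n) / (1 + dyc R k) ^ (γ * s))) ^ (1/s) *
              (ENNReal.ofReal ((2:ℝ) ^ (-t))) ^ (k+1)) :=
        ENNReal.tsum_mul_left
    _ ≤ (maximalFn n f x * volume (ball (0:En n) 1) *
          (ENNReal.ofReal ((2:ℝ)^n) * ENNReal.ofReal (R ^ t))) *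
          (G * (∑' k : ℕ,
            ENNReal.ofReal (dyc R k ^ ((α - (n:ℝ)) * s + n) / (1 + dyc R k) ^ (γ * s))) ^ (1/s)) :=
        mul_le_mul_right (hG _) _
    _ = D * maximalFn n f x *
          (∑' k : ℕ,
            ENNReal.ofReal (dyc R k ^ ((α - (n:ℝ)) * s + n) / (1 + dyc R k) ^ (γ * s))) ^ (1/s) *
          ENNReal.ofReal (R ^ t) := by
        rw [hDdef]
        ring
end
end

section
/- Hedberg-type inequality for Bessel-Riesz operators on generalized Morrey spaces: under the hypotheses 0 < α < n, γ > 0, n/(n+γ-α) < t < n/(n-α), 1 < p₁ < t', -αt'/p₁ ≤ β < -α, and φ(r) ≤ C r^β for all r > 0, there exists C' such that for every f ∈ L^{p₁,φ}(ℝ^n) and every x, |I_{α,γ}f(x)| ≤ C' ‖K_{α,γ}‖_{L^t} ‖f‖_{L^{p₁,φ}}^{-α/β} (Mf(x))^{1+α/β}. -/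
open MeasureTheory Metric ENNReal

noncomputable section

lemma lintegral_le_holder {X : Type*} [MeasurableSpace X] (μ : Measure X)
    (h : X → ℝ≥0∞) {p q : ℝ} (hpq : p.HolderConjugate q) :
    ∫⁻ x, h x ∂μ ≤ (∫⁻ x, h x ^ p ∂μ) ^ (1/p) * (μ Set.univ) ^ (1/q) := by
  rw [MeasureTheory.lintegral_def]
  refine iSup₂_le fun g hg => ?_
  rw [← SimpleFunc.lintegral_eq_lintegral]
  have h1 : ∫⁻ x, g x ∂μ = ∫⁻ x, (fun y => g y) x * (fun _ => (1:ℝ≥0∞)) x ∂μ := by simp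
  rw [h1]
  calc ∫⁻ x, (fun y => g y) x * (fun _ => (1:ℝ≥0∞)) x ∂μ
      ≤ (∫⁻ x, g x ^ p ∂μ) ^ (1/p) * (∫⁻ x, (1:ℝ≥0∞) ^ q ∂μ) ^ (1/q) :=
        ENNReal.lintegral_mul_le_Lp_mul_Lq μ hpq g.measurable.aemeasurable aemeasurable_const
    _ ≤ (∫⁻ x, h x ^ p ∂μ) ^ (1/p) * (μ Set.univ) ^ (1/q) := by
        rw [ENNReal.one_rpow, lintegral_one]
        exact mul_le_mul'
          (ENNReal.rpow_le_rpow
            (lintegral_mono fun x => ENNReal.rpow_le_rpow (hg x) hpq.nonneg)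
            (one_div_nonneg.mpr hpq.nonneg)) le_rfl

lemma setLIntegral_kernel_bound {X : Type*} [MeasurableSpace X] (μ : Measure X)
    {A S : Set X} (hA : MeasurableSet A) (hAS : A ⊆ S) (g h : X → ℝ≥0∞) {c : ℝ≥0∞}
    (hc : c ≠ ∞) (hg : ∀ y ∈ A, g y ≤ c) :
    ∫⁻ y in A, g y * h y ∂μ ≤ c * ∫⁻ y in S, h y ∂μ := by
  have h1 : ∫⁻ y in A, g y * h y ∂μ ≤ ∫⁻ y in A, c * h y ∂μ := by
    rw [← lintegral_indicator hA, ← lintegral_indicator hA]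
    refine lintegral_mono fun y => ?_
    by_cases hy : y ∈ A
    · simpa [hy] using mul_le_mul' (hg y hy) le_rfl
    · simp [hy]
  calc ∫⁻ y in A, g y * h y ∂μ ≤ ∫⁻ y in A, c * h y ∂μ := h1
    _ = c * ∫⁻ y in A, h y ∂μ := lintegral_const_mul' c _ hc
    _ ≤ c * ∫⁻ y in S, h y ∂μ := mul_le_mul' le_rfl (lintegral_mono_set hAS)

open Classical in
lemma exists_annulus_near {d R : ℝ} (hR : 0 < R) (h1 : d < R) (h2 : 0 < d) :
    ∃ k : ℕ, d < R / 2^k ∧ R / 2^(k+1) ≤ d := by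
  have hex : ∃ k : ℕ, R / d ≤ 2^(k+1) := by
    obtain ⟨m, hm⟩ := pow_unbounded_of_one_lt (R / d) (one_lt_two (α := ℝ))
    exact ⟨m, le_of_lt (lt_of_lt_of_le hm (pow_le_pow_right₀ one_le_two (Nat.le_succ m)))⟩
  refine ⟨Nat.find hex, ?_, ?_⟩
  · rcases Nat.eq_zero_or_pos (Nat.find hex) with h0 | hpos
    · rw [h0]; simpa using h1
    · have := Nat.find_min hex (Nat.sub_lt hpos one_pos)
      rw [not_le] at this
      have heq : Nat.find hex - 1 + 1 = Nat.find hex := by omega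
      rw [heq] at this
      rw [lt_div_iff₀ (by positivity)]
      rw [lt_div_iff₀ h2] at this
      nlinarith [this]
  · have := Nat.find_spec hex
    rw [div_le_iff₀ h2] at this
    rw [div_le_iff₀ (by positivity : (0:ℝ) < 2^(Nat.find hex + 1))]
    linarith [this]

open Classical in
lemma exists_annulus_far {d R : ℝ} (hR : 0 < R) (h1 : R ≤ d) :
    ∃ k : ℕ, d < 2^(k+1) * R ∧ 2^k * R ≤ d := by
  have hex : ∃ k : ℕ, d < 2^(k+1) * R := by
    obtain ⟨m, hm⟩ := pow_unbounded_of_one_lt (d / R) (one_lt_two (α := ℝ))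
    refine ⟨m, ?_⟩
    rw [div_lt_iff₀ hR] at hm
    have : (2:ℝ)^m ≤ 2^(m+1) := pow_le_pow_right₀ one_le_two (Nat.le_succ m)
    nlinarith
  refine ⟨Nat.find hex, Nat.find_spec hex, ?_⟩
  rcases Nat.eq_zero_or_pos (Nat.find hex) with h0 | hpos
  · rw [h0]; simpa using h1
  · have := Nat.find_min hex (Nat.sub_lt hpos one_pos)
    rw [not_lt] at this
    have heq : Nat.find hex - 1 + 1 = Nat.find hex := by omega
    rwa [heq] at this







lemma brKernel_nonneg (n : ℕ) (α γ : ℝ) (z : En n) : 0 ≤ brKernel n α γ z := by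
  unfold brKernel
  positivity

lemma brKernel_le {n : ℕ} {α γ : ℝ} (hαn : α ≤ n) (hγ : 0 < γ) {c : ℝ} (hc : 0 < c)
    {z : En n} (hz : c ≤ ‖z‖) : brKernel n α γ z ≤ c ^ (α - n) := by
  unfold brKernel
  have hb : (1:ℝ) ≤ (1 + ‖z‖) ^ γ :=
    Real.one_le_rpow (by linarith [norm_nonneg z]) hγ.le
  calc ‖z‖ ^ (α - n) / (1 + ‖z‖) ^ γ ≤ ‖z‖ ^ (α - n) / 1 := by
        apply div_le_div_of_nonneg_left ?_ ?_ hb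
        · exact Real.rpow_nonneg (norm_nonneg z) _
        · linarith
    _ = ‖z‖ ^ (α - n) := div_one _
    _ ≤ c ^ (α - n) := Real.rpow_le_rpow_of_nonpos hc hz (by linarith)

lemma lintegral_ball_le_maximal (n : ℕ) (f : En n → ℝ) (x : En n) {r : ℝ} (hr : 0 < r) :
    ∫⁻ y in ball x r, ENNReal.ofReal |f y| ≤ maximalFn n f x * volume (ball x r) := by
  have key : (volume (ball x r))⁻¹ * ∫⁻ y in ball x r, ENNReal.ofReal |f y| ≤
      maximalFn n f x := by
    refine le_iSup_of_le x (le_iSup_of_le r (le_iSup_of_le hr (le_iSup_of_le ?_ le_rfl)))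
    exact mem_ball_self hr
  have hv0 : volume (ball x r) ≠ 0 := (measure_ball_pos volume x hr).ne'
  have hvt : volume (ball x r) ≠ ⊤ := measure_ball_lt_top.ne
  calc ∫⁻ y in ball x r, ENNReal.ofReal |f y|
      = volume (ball x r) * ((volume (ball x r))⁻¹ * ∫⁻ y in ball x r, ENNReal.ofReal |f y|) := by
        rw [← mul_assoc, ENNReal.mul_inv_cancel hv0 hvt, one_mul]
    _ ≤ volume (ball x r) * maximalFn n f x := mul_le_mul' le_rfl key
    _ = maximalFn n f x * volume (ball x r) := mul_comm _ _

lemma volume_ball_en (n : ℕ) (hn : 1 ≤ n) (x : En n) {r : ℝ} (hr : 0 ≤ r) :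
    volume (ball x r) = ENNReal.ofReal (r ^ n) * volume (ball (0 : En n) 1) := by
  haveI : Nontrivial (En n) := Module.nontrivial_of_finrank_pos (R := ℝ)
    (by rw [finrank_euclideanSpace_fin]; omega)
  rw [Measure.addHaar_ball volume x hr, finrank_euclideanSpace_fin]

lemma near_calc (n : ℕ) (α R : ℝ) (hR : 0 < R) (k : ℕ) :
    (R / 2^(k+1)) ^ (α - (n:ℝ)) * (R / 2^k) ^ (n:ℕ)
      = 2 ^ ((n:ℝ) - α) * ((2:ℝ) ^ (-α)) ^ k * R ^ α := by
  have h2k : (0:ℝ) < 2^k := by positivity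
  have hs : (0:ℝ) < R / 2^k := by positivity
  have e1 : R / 2^(k+1) = (R / 2^k) / 2 := by rw [pow_succ]; ring
  have e2 : ((R / 2^k) / 2) ^ (α - (n:ℝ)) = (R/2^k) ^ (α-(n:ℝ)) * 2 ^ ((n:ℝ) - α) := by
    rw [Real.div_rpow hs.le (by norm_num : (0:ℝ) ≤ 2), div_eq_mul_inv,
      ← Real.rpow_neg (by norm_num : (0:ℝ) ≤ 2), neg_sub]
  have e3 : (R/2^k) ^ (α-(n:ℝ)) * (R / 2^k) ^ (n:ℕ) = (R/2^k) ^ α := by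
    rw [← Real.rpow_natCast (R/2^k) n, ← Real.rpow_add hs]
    norm_num
  have e4 : (R/2^k) ^ α = R ^ α * ((2:ℝ) ^ (-α)) ^ k := by
    rw [Real.div_rpow hR.le h2k.le, ← Real.rpow_natCast (2:ℝ) k,
      ← Real.rpow_mul (by norm_num : (0:ℝ) ≤ 2),
      ← Real.rpow_natCast ((2:ℝ) ^ (-α)) k,
      ← Real.rpow_mul (by norm_num : (0:ℝ) ≤ 2), div_eq_mul_inv,
      ← Real.rpow_neg (by norm_num : (0:ℝ) ≤ 2)]
    ring_nf
  rw [e1, e2]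
  calc (R/2^k) ^ (α-(n:ℝ)) * 2 ^ ((n:ℝ) - α) * (R / 2^k) ^ (n:ℕ)
      = ((R/2^k) ^ (α-(n:ℝ)) * (R / 2^k) ^ (n:ℕ)) * 2 ^ ((n:ℝ) - α) := by ring
    _ = (R/2^k) ^ α * 2 ^ ((n:ℝ) - α) := by rw [e3]
    _ = _ := by rw [e4]; ring

lemma near_bound (n : ℕ) (hn : 1 ≤ n) {α : ℝ} (γ : ℝ) (hα0 : 0 < α) (hαn : α < n) (hγ : 0 < γ)
    (f : En n → ℝ) (x : En n) {R : ℝ} (hR : 0 < R) :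
    ∫⁻ y in ball x R, ENNReal.ofReal (brKernel n α γ (x - y)) * ENNReal.ofReal |f y| ≤
      (ENNReal.ofReal (2 ^ ((n:ℝ) - α)) * (1 - ENNReal.ofReal ((2:ℝ) ^ (-α)))⁻¹ *
        volume (ball (0 : En n) 1)) * ENNReal.ofReal (R ^ α) * maximalFn n f x := by
  set M := maximalFn n f x with hM
  set V := volume (ball (0 : En n) 1) with hV
  haveI : Nontrivial (En n) := Module.nontrivial_of_finrank_pos (R := ℝ)
    (by rw [finrank_euclideanSpace_fin]; omega)
  set A : ℕ → Set (En n) := fun k => ball x (R / 2^k) \ ball x (R / 2^(k+1)) with hA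
  set g : En n → ℝ≥0∞ := fun y => ENNReal.ofReal (brKernel n α γ (x - y)) with hg
  set h : En n → ℝ≥0∞ := fun y => ENNReal.ofReal |f y| with hh
  -- coverage
  have hcover : ball x R ⊆ {x} ∪ ⋃ k, A k := by
    intro y hy
    by_cases hyx : y = x
    · exact Or.inl (by simp [hyx])
    · have hd : 0 < dist y x := dist_pos.mpr hyx
      obtain ⟨k, hk1, hk2⟩ := exists_annulus_near hR (mem_ball.mp hy) hd
      refine Or.inr (Set.mem_iUnion.mpr ⟨k, ?_, ?_⟩)
      · exact mem_ball.mpr hk1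
      · exact fun hmem => absurd (mem_ball.mp hmem) (not_lt.mpr hk2)
  -- per-annulus bound
  have hann : ∀ k : ℕ, ∫⁻ y in A k, g y * h y ≤
      ENNReal.ofReal ((R / 2^(k+1)) ^ (α - (n:ℝ))) * (M * volume (ball x (R / 2^k))) := by
    intro k
    have hc : (0:ℝ) < R / 2^(k+1) := by positivity
    have hb : ∫⁻ y in A k, g y * h y ≤
        ENNReal.ofReal ((R / 2^(k+1)) ^ (α - (n:ℝ))) * ∫⁻ y in ball x (R / 2^k), h y := by
      refine setLIntegral_kernel_bound volume (measurableSet_ball.diff measurableSet_ball)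
        Set.diff_subset g h ofReal_ne_top (fun y hy => ?_)
      refine ENNReal.ofReal_le_ofReal (brKernel_le hαn.le hγ hc ?_)
      have : R / 2^(k+1) ≤ dist y x := not_lt.mp fun hlt => hy.2 (mem_ball.mpr hlt)
      rwa [dist_comm, dist_eq_norm] at this
    refine hb.trans (mul_le_mul' le_rfl ?_)
    exact lintegral_ball_le_maximal n f x (by positivity)
  calc ∫⁻ y in ball x R, g y * h y
      ≤ ∫⁻ y in {x} ∪ ⋃ k, A k, g y * h y := lintegral_mono_set hcover
    _ ≤ (∫⁻ y in ({x} : Set (En n)), g y * h y) + ∫⁻ y in ⋃ k, A k, g y * h y :=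
        lintegral_union_le _ _ _
    _ ≤ 0 + ∑' k, ∫⁻ y in A k, g y * h y := by
        refine add_le_add ?_ (lintegral_iUnion_le _ _)
        rw [setLIntegral_measure_zero _ _ (measure_singleton x)]
    _ = ∑' k, ∫⁻ y in A k, g y * h y := by rw [zero_add]
    _ ≤ ∑' k, ENNReal.ofReal ((R / 2^(k+1)) ^ (α - (n:ℝ))) * (M * volume (ball x (R / 2^k))) :=
        ENNReal.tsum_le_tsum hann
    _ = ∑' k, (ENNReal.ofReal (2 ^ ((n:ℝ) - α) * R ^ α) * (ENNReal.ofReal ((2:ℝ) ^ (-α)))^k)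
          * (V * M) := by
        refine tsum_congr fun k => ?_
        rw [volume_ball_en n hn x (by positivity : (0:ℝ) ≤ R / 2^k)]
        have key : ENNReal.ofReal ((R / 2^(k+1)) ^ (α - (n:ℝ))) *
              ENNReal.ofReal ((R/2^k)^(n:ℕ))
            = ENNReal.ofReal (2 ^ ((n:ℝ) - α) * R ^ α) *
              (ENNReal.ofReal ((2:ℝ) ^ (-α)))^k := by
          rw [← ENNReal.ofReal_mul (by positivity), near_calc n α R hR k,
            show (2:ℝ) ^ ((n:ℝ) - α) * ((2:ℝ) ^ (-α)) ^ k * R ^ α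
              = (2 ^ ((n:ℝ) - α) * R ^ α) * ((2:ℝ) ^ (-α)) ^ k from by ring,
            ENNReal.ofReal_mul (by positivity), ENNReal.ofReal_pow (by positivity)]
        calc ENNReal.ofReal ((R / 2^(k+1)) ^ (α - (n:ℝ))) *
              (M * (ENNReal.ofReal ((R/2^k)^(n:ℕ)) * V))
            = (ENNReal.ofReal ((R / 2^(k+1)) ^ (α - (n:ℝ))) *
                ENNReal.ofReal ((R/2^k)^(n:ℕ))) * (V*M) := by ring
          _ = _ := by rw [key]
    _ = ENNReal.ofReal (2 ^ ((n:ℝ) - α) * R ^ α) * (1 - ENNReal.ofReal ((2:ℝ) ^ (-α)))⁻¹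
          * (V * M) := by
        rw [ENNReal.tsum_mul_right, ENNReal.tsum_mul_left, ENNReal.tsum_geometric]
    _ ≤ _ := by
        rw [ENNReal.ofReal_mul (by positivity)]
        ring_nf
        exact le_rfl



lemma morrey_ball_bound (n : ℕ) {p₁ : ℝ} (hp1 : 1 < p₁) (φ : ℝ → ℝ) (f : En n → ℝ)
    (hfin : gMorreyNorm n p₁ φ f < ⊤) (a : En n) {r : ℝ} (hr : 0 < r) :
    ∫⁻ y in ball a r, ENNReal.ofReal (|f y| ^ p₁) ≤
      (gMorreyNorm n p₁ φ f * ENNReal.ofReal (φ r)) ^ p₁ * (ENNReal.ofReal r) ^ (n:ℝ) := by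
  set N := gMorreyNorm n p₁ φ f with hN
  set A := ENNReal.ofReal (φ r) with hA
  set B := (ENNReal.ofReal r) ^ (n:ℝ) with hB
  set I := ∫⁻ y in ball a r, ENNReal.ofReal (|f y| ^ p₁) with hI
  have hB0 : B ≠ 0 :=
    (ENNReal.rpow_pos (ENNReal.ofReal_pos.mpr hr) ofReal_ne_top).ne'
  have hBt : B ≠ ⊤ := ENNReal.rpow_ne_top_of_nonneg (by positivity) ofReal_ne_top
  have hle : A⁻¹ * (B⁻¹ * I) ^ (1/p₁) ≤ N := by
    rw [hN, gMorreyNorm]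
    exact le_iSup_of_le r (le_iSup_of_le hr (le_iSup_of_le a le_rfl))
  by_cases hA0 : A = 0
  · rw [hA0, ENNReal.inv_zero] at hle
    have hX : (B⁻¹ * I) ^ (1/p₁) = 0 := by
      by_contra hX
      rw [ENNReal.top_mul hX] at hle
      exact absurd (top_le_iff.mp (le_trans le_top hle)) hfin.ne
    have : B⁻¹ * I = 0 := by
      rcases (ENNReal.rpow_eq_zero_iff).mp hX with ⟨h1, _⟩ | ⟨_, h2⟩
      · exact h1
      · exact absurd h2 (not_lt.mpr (by positivity))
    have hI0 : I = 0 := by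
      rcases mul_eq_zero.mp this with h | h
      · exact absurd h (by simp [ENNReal.inv_eq_zero, hBt])
      · exact h
    rw [hI0]; exact zero_le'
  · have h1 : (B⁻¹ * I) ^ (1/p₁) ≤ A * N :=
      (ENNReal.inv_mul_le_iff hA0 ofReal_ne_top).mp hle
    have h2 : B⁻¹ * I ≤ (A * N) ^ p₁ := by
      have := ENNReal.rpow_le_rpow h1 (by positivity : (0:ℝ) ≤ p₁)
      rwa [← ENNReal.rpow_mul, one_div_mul_cancel (by positivity : p₁ ≠ 0),
        ENNReal.rpow_one] at this
    calc I = B * (B⁻¹ * I) := by rw [← mul_assoc, ENNReal.mul_inv_cancel hB0 hBt, one_mul]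
      _ ≤ B * (A * N) ^ p₁ := mul_le_mul' le_rfl h2
      _ = (N * A) ^ p₁ * B := by rw [mul_comm A N]; ring

lemma far_ball_bound (n : ℕ) (hn : 1 ≤ n) {p₁ β Cφ : ℝ} (hp1 : 1 < p₁) (hCφ : 0 < Cφ)
    (φ : ℝ → ℝ) (hφ : ∀ r, 0 < r → φ r ≤ Cφ * r ^ β) (f : En n → ℝ)
    (hfin : gMorreyNorm n p₁ φ f < ⊤) (a : En n) {r : ℝ} (hr : 0 < r) :
    ∫⁻ y in ball a r, ENNReal.ofReal |f y| ≤
      gMorreyNorm n p₁ φ f * ENNReal.ofReal (Cφ * r ^ (β + (n:ℝ))) *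
        (volume (ball (0:En n) 1)) ^ (1 - 1/p₁) := by
  have hpq : p₁.HolderConjugate (Real.conjExponent p₁) := Real.HolderConjugate.conjExponent hp1
  set q := Real.conjExponent p₁ with hq
  set N := gMorreyNorm n p₁ φ f with hN
  set V := volume (ball (0:En n) 1) with hV
  have h1q : 1/q = 1 - 1/p₁ := by
    have := hpq.inv_add_inv_eq_one
    rw [inv_eq_one_div, inv_eq_one_div] at this
    linarith
  have hofr0 : ENNReal.ofReal r ≠ 0 := (ENNReal.ofReal_pos.mpr hr).ne'
  have step1 : ∫⁻ y in ball a r, ENNReal.ofReal |f y| ≤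
      (∫⁻ y in ball a r, ENNReal.ofReal (|f y| ^ p₁)) ^ (1/p₁) *
        (volume (ball a r)) ^ (1/q) := by
    have := lintegral_le_holder (volume.restrict (ball a r))
      (fun y => ENNReal.ofReal |f y|) hpq
    rw [Measure.restrict_apply_univ] at this
    refine le_trans this ?_
    refine mul_le_mul' (ENNReal.rpow_le_rpow (lintegral_mono fun y => ?_)
      (by positivity)) le_rfl
    rw [← ENNReal.ofReal_rpow_of_nonneg (abs_nonneg _) (by positivity : (0:ℝ) ≤ p₁)]
  have step2 : (∫⁻ y in ball a r, ENNReal.ofReal (|f y| ^ p₁)) ^ (1/p₁) ≤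
      N * ENNReal.ofReal (φ r) * (ENNReal.ofReal r) ^ ((n:ℝ) * (1/p₁)) := by
    have h := morrey_ball_bound n hp1 φ f hfin a hr
    have h2 := ENNReal.rpow_le_rpow h (by positivity : (0:ℝ) ≤ 1/p₁)
    refine le_trans h2 (le_of_eq ?_)
    rw [ENNReal.mul_rpow_of_nonneg _ _ (by positivity : (0:ℝ) ≤ 1/p₁),
      ← ENNReal.rpow_mul, mul_one_div_cancel (by positivity : p₁ ≠ 0), ENNReal.rpow_one,
      ← ENNReal.rpow_mul]
  have step3 : (volume (ball a r)) ^ (1/q) =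
      (ENNReal.ofReal r) ^ ((n:ℝ) * (1/q)) * V ^ (1/q) := by
    rw [volume_ball_en n hn a hr.le,
      ENNReal.mul_rpow_of_nonneg _ _ (le_of_lt hpq.symm.one_div_pos)]
    congr 1
    rw [← Real.rpow_natCast r n, ← ENNReal.ofReal_rpow_of_pos hr, ← ENNReal.rpow_mul]
  calc ∫⁻ y in ball a r, ENNReal.ofReal |f y|
      ≤ (N * ENNReal.ofReal (φ r) * (ENNReal.ofReal r) ^ ((n:ℝ) * (1/p₁))) *
        ((ENNReal.ofReal r) ^ ((n:ℝ) * (1/q)) * V ^ (1/q)) := by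
        refine le_trans step1 ?_
        rw [step3]
        exact mul_le_mul' step2 le_rfl
    _ = N * ENNReal.ofReal (φ r) * (ENNReal.ofReal r) ^ (n:ℝ) * V ^ (1/q) := by
        have hmerge : ENNReal.ofReal r ^ ((n:ℝ) * (1/p₁)) *
            ENNReal.ofReal r ^ ((n:ℝ) * (1/q)) = ENNReal.ofReal r ^ (n:ℝ) := by
          rw [← ENNReal.rpow_add _ _ hofr0 ofReal_ne_top]
          congr 1
          have := hpq.inv_add_inv_eq_one
          rw [inv_eq_one_div, inv_eq_one_div] at this
          nlinarith [this]
        rw [← hmerge]; ring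
    _ ≤ N * ENNReal.ofReal (Cφ * r ^ β) * (ENNReal.ofReal r) ^ (n:ℝ) * V ^ (1/q) := by
        exact mul_le_mul' (mul_le_mul' (mul_le_mul' le_rfl
          (ENNReal.ofReal_le_ofReal (hφ r hr))) le_rfl) le_rfl
    _ = N * ENNReal.ofReal (Cφ * r ^ (β + (n:ℝ))) * V ^ (1/q) := by
        have hm2 : ENNReal.ofReal (Cφ * r ^ β) * ENNReal.ofReal (r ^ (n:ℝ))
            = ENNReal.ofReal (Cφ * r ^ (β + (n:ℝ))) := by
          rw [← ENNReal.ofReal_mul (by positivity), mul_assoc Cφ, ← Real.rpow_add hr]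
        rw [ENNReal.ofReal_rpow_of_pos hr, ← hm2]; ring
    _ = _ := by rw [h1q]

lemma far_calc (n : ℕ) (α β R : ℝ) (hR : 0 < R) (k : ℕ) :
    (2^k * R) ^ (α - (n:ℝ)) * (Cφ * (2^(k+1) * R) ^ (β + (n:ℝ)))
      = (2 ^ ((n:ℝ) + β) * Cφ * R ^ (α+β)) * ((2:ℝ) ^ (α+β)) ^ k := by
  have h2k : (0:ℝ) < 2^k := by positivity
  have hs : (0:ℝ) < 2^k * R := by positivity
  have e1 : (2:ℝ)^(k+1) * R = 2 * (2^k * R) := by rw [pow_succ]; ring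
  have e2 : (2 * (2^k * R)) ^ (β + (n:ℝ)) = 2 ^ (β + (n:ℝ)) * (2^k * R) ^ (β + (n:ℝ)) :=
    Real.mul_rpow (by norm_num) hs.le
  have e3 : (2^k * R) ^ (α-(n:ℝ)) * (2^k * R) ^ (β + (n:ℝ)) = (2^k * R) ^ (α+β) := by
    rw [← Real.rpow_add hs]; ring_nf
  have e4 : (2^k * R) ^ (α+β) = ((2:ℝ) ^ (α+β)) ^ k * R ^ (α+β) := by
    rw [Real.mul_rpow h2k.le hR.le, ← Real.rpow_natCast (2:ℝ) k,
      ← Real.rpow_mul (by norm_num : (0:ℝ) ≤ 2),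
      ← Real.rpow_natCast ((2:ℝ) ^ (α+β)) k,
      ← Real.rpow_mul (by norm_num : (0:ℝ) ≤ 2)]
    ring_nf
  calc (2^k * R) ^ (α - (n:ℝ)) * (Cφ * (2^(k+1) * R) ^ (β + (n:ℝ)))
      = ((2^k * R) ^ (α-(n:ℝ)) * (2^k * R) ^ (β + (n:ℝ))) * Cφ * 2 ^ (β + (n:ℝ)) := by
        rw [e1, e2]; ring
    _ = (2^k * R) ^ (α+β) * Cφ * 2 ^ (β + (n:ℝ)) := by rw [e3]
    _ = _ := by rw [e4, show β + (n:ℝ) = (n:ℝ) + β from by ring]; ring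

lemma far_bound (n : ℕ) (hn : 1 ≤ n) {α β γ p₁ Cφ : ℝ} (hαn : α < n) (hγ : 0 < γ)
    (hp1 : 1 < p₁) (hCφ : 0 < Cφ) (φ : ℝ → ℝ) (hφ : ∀ r, 0 < r → φ r ≤ Cφ * r ^ β)
    (f : En n → ℝ) (hfin : gMorreyNorm n p₁ φ f < ⊤) (x : En n) {R : ℝ} (hR : 0 < R) :
    ∫⁻ y in (ball x R)ᶜ, ENNReal.ofReal (brKernel n α γ (x - y)) * ENNReal.ofReal |f y| ≤
      (ENNReal.ofReal (2 ^ ((n:ℝ) + β) * Cφ) * (1 - ENNReal.ofReal ((2:ℝ) ^ (α+β)))⁻¹ *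
        (volume (ball (0:En n) 1)) ^ (1 - 1/p₁)) * gMorreyNorm n p₁ φ f *
        ENNReal.ofReal (R ^ (α+β)) := by
  set N := gMorreyNorm n p₁ φ f with hN
  set V := volume (ball (0:En n) 1) with hV
  set B : ℕ → Set (En n) := fun k => ball x (2^(k+1) * R) \ ball x (2^k * R) with hB
  set g : En n → ℝ≥0∞ := fun y => ENNReal.ofReal (brKernel n α γ (x - y)) with hg
  set h : En n → ℝ≥0∞ := fun y => ENNReal.ofReal |f y| with hh
  have hcover : (ball x R)ᶜ ⊆ ⋃ k, B k := by
    intro y hy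
    have hd : R ≤ dist y x := not_lt.mp fun hlt => hy (mem_ball.mpr hlt)
    obtain ⟨k, hk1, hk2⟩ := exists_annulus_far hR hd
    exact Set.mem_iUnion.mpr ⟨k, mem_ball.mpr hk1,
      fun hmem => absurd (mem_ball.mp hmem) (not_lt.mpr hk2)⟩
  have hann : ∀ k : ℕ, ∫⁻ y in B k, g y * h y ≤
      ENNReal.ofReal ((2^k * R) ^ (α - (n:ℝ))) *
        (N * ENNReal.ofReal (Cφ * (2^(k+1) * R) ^ (β + (n:ℝ))) * V ^ (1 - 1/p₁)) := by
    intro k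
    have hc : (0:ℝ) < 2^k * R := by positivity
    have hb : ∫⁻ y in B k, g y * h y ≤
        ENNReal.ofReal ((2^k * R) ^ (α - (n:ℝ))) * ∫⁻ y in ball x (2^(k+1) * R), h y := by
      refine setLIntegral_kernel_bound volume (measurableSet_ball.diff measurableSet_ball)
        Set.diff_subset g h ofReal_ne_top (fun y hy => ?_)
      refine ENNReal.ofReal_le_ofReal (brKernel_le hαn.le hγ hc ?_)
      have : 2^k * R ≤ dist y x := not_lt.mp fun hlt => hy.2 (mem_ball.mpr hlt)
      rwa [dist_comm, dist_eq_norm] at this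
    exact hb.trans (mul_le_mul' le_rfl
      (far_ball_bound n hn hp1 hCφ φ hφ f hfin x (by positivity)))
  calc ∫⁻ y in (ball x R)ᶜ, g y * h y
      ≤ ∫⁻ y in ⋃ k, B k, g y * h y := lintegral_mono_set hcover
    _ ≤ ∑' k, ∫⁻ y in B k, g y * h y := lintegral_iUnion_le _ _
    _ ≤ ∑' k, ENNReal.ofReal ((2^k * R) ^ (α - (n:ℝ))) *
          (N * ENNReal.ofReal (Cφ * (2^(k+1) * R) ^ (β + (n:ℝ))) * V ^ (1 - 1/p₁)) :=
        ENNReal.tsum_le_tsum hann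
    _ = ∑' k, (ENNReal.ofReal (2 ^ ((n:ℝ) + β) * Cφ * R ^ (α+β)) *
          (ENNReal.ofReal ((2:ℝ) ^ (α+β)))^k) * (N * V ^ (1 - 1/p₁)) := by
        refine tsum_congr fun k => ?_
        have key : ENNReal.ofReal ((2^k * R) ^ (α - (n:ℝ))) *
            ENNReal.ofReal (Cφ * (2^(k+1) * R) ^ (β + (n:ℝ)))
            = ENNReal.ofReal (2 ^ ((n:ℝ) + β) * Cφ * R ^ (α+β)) *
              (ENNReal.ofReal ((2:ℝ) ^ (α+β)))^k := by
          rw [← ENNReal.ofReal_mul (by positivity), far_calc n α β R hR k,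
            ENNReal.ofReal_mul (by positivity), ENNReal.ofReal_pow (by positivity)]
        rw [← key]; ring
    _ = (ENNReal.ofReal (2 ^ ((n:ℝ) + β) * Cφ * R ^ (α+β)) *
          (1 - ENNReal.ofReal ((2:ℝ) ^ (α+β)))⁻¹) * (N * V ^ (1 - 1/p₁)) := by
        rw [ENNReal.tsum_mul_right, ENNReal.tsum_mul_left, ENNReal.tsum_geometric]
    _ = _ := by
        rw [ENNReal.ofReal_mul (by positivity : (0:ℝ) ≤ 2 ^ ((n:ℝ) + β) * Cφ)]
        ring



lemma brKernel_measurable (n : ℕ) (α γ : ℝ) : Measurable (brKernel n α γ) := by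
  unfold brKernel
  exact (measurable_norm.pow measurable_const).div
    ((measurable_const.add measurable_norm).pow measurable_const)

lemma eLpNorm_brKernel_ne_zero (n : ℕ) (hn : 1 ≤ n) {α γ t : ℝ} (hα0 : 0 < α) (hαn : α < n)
    (hγ : 0 < γ) (ht : 0 < t) :
    eLpNorm (brKernel n α γ) (ENNReal.ofReal t) volume ≠ 0 := by
  haveI : Nontrivial (En n) := Module.nontrivial_of_finrank_pos (R := ℝ)
    (by rw [finrank_euclideanSpace_fin]; omega)
  intro h0
  have hae := (eLpNorm_eq_zero_iff
    ((brKernel_measurable n α γ).aestronglyMeasurable)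
    (by simpa [ENNReal.ofReal_eq_zero] using not_le.mpr ht)).mp h0
  have hnull : volume {z : En n | ¬ brKernel n α γ z = 0} = 0 := ae_iff.mp hae
  have hsub : ball (0 : En n) 1 \ {0} ⊆ {z : En n | ¬ brKernel n α γ z = 0} := by
    intro z hz
    have hz0 : z ≠ 0 := hz.2
    have hnz : 0 < ‖z‖ := norm_pos_iff.mpr hz0
    have : 0 < brKernel n α γ z := by
      unfold brKernel
      positivity
    exact this.ne'
  have h1 : volume (ball (0 : En n) 1 \ {0}) = 0 := measure_mono_null hsub hnull
  rw [measure_diff_null (measure_singleton _)] at h1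
  exact absurd h1 (measure_ball_pos volume _ one_pos).ne'


/-- Hedberg-type inequality for the Bessel-Riesz operator with
the Lebesgue norm of the kernel. -/
theorem besselRiesz_hedberg (n : ℕ) (hn : 1 ≤ n) (α γ t p₁ β Cφ : ℝ) (φ : ℝ → ℝ)
    (hα0 : 0 < α) (hαn : α < n) (hγ : 0 < γ)
    (ht1 : (n : ℝ) / ((n : ℝ) + γ - α) < t) (ht2 : t < (n : ℝ) / ((n : ℝ) - α))
    (hp1 : 1 < p₁) (hp2 : p₁ < t / (t - 1))
    (hβ1 : -α * (t / (t - 1)) / p₁ ≤ β) (hβ2 : β < -α)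
    (hCφ : 0 < Cφ) (hφ : ∀ r, 0 < r → φ r ≤ Cφ * r ^ β) :
    ∃ C' > (0 : ℝ), ∀ f : En n → ℝ, ∀ x : En n,
      gMorreyNorm n p₁ φ f < ⊤ → 0 < gMorreyNorm n p₁ φ f → 0 < maximalFn n f x →
        ENNReal.ofReal |brOp n α γ f x| ≤
          ENNReal.ofReal C' * eLpNorm (brKernel n α γ) (ENNReal.ofReal t) volume *
            (gMorreyNorm n p₁ φ f) ^ (-α / β) * (maximalFn n f x) ^ (1 + α / β) := by
  have hn1 : (1:ℝ) ≤ (n:ℝ) := by exact_mod_cast hn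
  have ht0 : 0 < t := lt_trans (div_pos (by linarith) (by linarith)) ht1
  have hβ0 : β < 0 := lt_trans hβ2 (by linarith)
  have hβne : β ≠ 0 := hβ0.ne
  have hαβ : α + β < 0 := by linarith
  set V := volume (ball (0 : En n) 1) with hV
  have hVpos : 0 < V := measure_ball_pos volume _ one_pos
  have hVne : V ≠ ⊤ := measure_ball_lt_top.ne
  set e := eLpNorm (brKernel n α γ) (ENNReal.ofReal t) volume with he
  have he0 : e ≠ 0 := eLpNorm_brKernel_ne_zero n hn hα0 hαn hγ ht0
  set D₁ := ENNReal.ofReal (2 ^ ((n:ℝ) - α)) * (1 - ENNReal.ofReal ((2:ℝ) ^ (-α)))⁻¹ * V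
    with hD₁
  set D₂ := ENNReal.ofReal (2 ^ ((n:ℝ) + β) * Cφ) *
    (1 - ENNReal.ofReal ((2:ℝ) ^ (α+β)))⁻¹ * V ^ (1 - 1/p₁) with hD₂
  set D := D₁ + D₂ with hD
  have hgeom1 : (1 - ENNReal.ofReal ((2:ℝ) ^ (-α)))⁻¹ ≠ ⊤ := by
    rw [Ne, ENNReal.inv_eq_top, tsub_eq_zero_iff_le, ← not_lt]
    intro h; exact h (ENNReal.ofReal_lt_one.mpr
      (Real.rpow_lt_one_of_one_lt_of_neg one_lt_two (by linarith)))
  have hgeom2 : (1 - ENNReal.ofReal ((2:ℝ) ^ (α+β)))⁻¹ ≠ ⊤ := by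
    rw [Ne, ENNReal.inv_eq_top, tsub_eq_zero_iff_le, ← not_lt]
    intro h; exact h (ENNReal.ofReal_lt_one.mpr
      (Real.rpow_lt_one_of_one_lt_of_neg one_lt_two hαβ))
  have hDne : D ≠ ⊤ := by
    rw [hD, hD₁, hD₂]
    refine ENNReal.add_ne_top.mpr ⟨?_, ?_⟩
    · exact ENNReal.mul_ne_top (ENNReal.mul_ne_top ofReal_ne_top hgeom1) hVne
    · exact ENNReal.mul_ne_top (ENNReal.mul_ne_top ofReal_ne_top hgeom2)
        (ENNReal.rpow_ne_top_of_nonneg (by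
          have : 1/p₁ < 1 := by rw [div_lt_one (by linarith)]; linarith
          linarith) hVne)
  classical
  refine ⟨if het : e = ⊤ then 1 else (D.toReal + 1) / e.toReal, ?_, ?_⟩
  · split_ifs with het
    · norm_num
    · have : 0 < e.toReal := ENNReal.toReal_pos he0 het
      positivity
  intro f x hfin hNpos hMpos
  set N := gMorreyNorm n p₁ φ f with hNdef
  set M := maximalFn n f x with hMdef
  set C' : ℝ := if het : e = ⊤ then 1 else (D.toReal + 1) / e.toReal with hC'
  have hC'pos : 0 < C' := by
    rw [hC']; split_ifs with het
    · norm_num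
    · have : 0 < e.toReal := ENNReal.toReal_pos he0 het
      positivity
  have hDC : D ≤ ENNReal.ofReal C' * e := by
    rw [hC']; split_ifs with het
    · rw [het]; simp
    · have hetr : 0 < e.toReal := ENNReal.toReal_pos he0 het
      calc D = ENNReal.ofReal D.toReal := (ENNReal.ofReal_toReal hDne).symm
        _ ≤ ENNReal.ofReal (D.toReal + 1) := ENNReal.ofReal_le_ofReal (by linarith)
        _ = ENNReal.ofReal ((D.toReal + 1) / e.toReal * e.toReal) := by
            rw [div_mul_cancel₀ _ hetr.ne']
        _ = ENNReal.ofReal ((D.toReal + 1) / e.toReal) * ENNReal.ofReal e.toReal :=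
            ENNReal.ofReal_mul (by positivity)
        _ = ENNReal.ofReal ((D.toReal + 1) / e.toReal) * e := by
            rw [ENNReal.ofReal_toReal het]
  -- exponent facts
  have hexp1 : 0 < 1 + α/β := by
    have : 1 + α/β = (α+β)/β := by rw [add_div, div_self hβne]; ring
    rw [this]
    exact div_pos_iff.mpr (Or.inr ⟨hαβ, hβ0⟩)
  have hexp2 : 0 < -α/β := div_pos_iff.mpr (Or.inr ⟨by linarith, hβ0⟩)
  have hNrpow : N ^ (-α/β) ≠ 0 := (ENNReal.rpow_pos hNpos hfin.ne).ne'
  -- the master pointwise bound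
  have hmaster : ∀ R : ℝ, 0 < R →
      ENNReal.ofReal |brOp n α γ f x| ≤
        D₁ * ENNReal.ofReal (R ^ α) * M + D₂ * N * ENNReal.ofReal (R ^ (α+β)) := by
    intro R hR
    have hstep : ENNReal.ofReal |brOp n α γ f x| ≤
        ∫⁻ y, ENNReal.ofReal (brKernel n α γ (x - y)) * ENNReal.ofReal |f y| := by
      rw [← Real.enorm_eq_ofReal_abs]
      refine le_trans (enorm_integral_le_lintegral_enorm _) (le_of_eq ?_)
      refine lintegral_congr fun y => ?_
      rw [Real.enorm_eq_ofReal_abs, abs_mul, ENNReal.ofReal_mul (abs_nonneg _),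
        abs_of_nonneg (brKernel_nonneg n α γ _)]
    refine hstep.trans ?_
    rw [← lintegral_add_compl
      (fun y => ENNReal.ofReal (brKernel n α γ (x - y)) * ENNReal.ofReal |f y|)
      (measurableSet_ball (x := x) (ε := R))]
    exact add_le_add (near_bound n hn γ hα0 hαn hγ f x hR)
      (far_bound n hn hαn hγ hp1 hCφ φ hφ f hfin x hR)
  by_cases hM : M = ⊤
  · -- RHS is infinite
    have : ENNReal.ofReal C' * e * N ^ (-α/β) * M ^ (1 + α/β) = ⊤ := by
      rw [hM, ENNReal.top_rpow_of_pos hexp1, ENNReal.mul_top]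
      exact mul_ne_zero (mul_ne_zero (ENNReal.ofReal_pos.mpr hC'pos).ne' he0) hNrpow
    rw [this]; exact le_top
  · have hM0 : M ≠ 0 := hMpos.ne'
    have hN0 : N ≠ 0 := hNpos.ne'
    have hNt : N ≠ ⊤ := hfin.ne
    set m := M.toReal with hm
    set ν := N.toReal with hν
    have hmpos : 0 < m := ENNReal.toReal_pos hM0 hM
    have hνpos : 0 < ν := ENNReal.toReal_pos hN0 hNt
    set R := (m/ν) ^ (1/β) with hR
    have hRpos : 0 < R := Real.rpow_pos_of_pos (by positivity) _
    have hbase : (0:ℝ) < m/ν := by positivity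
    have hRα : R ^ α * m = m ^ (1+α/β) * ν ^ (-α/β) := by
      rw [hR, ← Real.rpow_mul hbase.le, show 1/β*α = α/β from by ring,
        Real.div_rpow hmpos.le hνpos.le, div_eq_mul_inv, ← Real.rpow_neg hνpos.le]
      calc m ^ (α/β) * ν ^ (-(α/β)) * m
          = (m ^ (α/β) * m ^ (1:ℝ)) * ν ^ (-(α/β)) := by rw [Real.rpow_one]; ring
        _ = m ^ (1+α/β) * ν ^ (-α/β) := by
            rw [← Real.rpow_add hmpos, neg_div, add_comm (α/β) 1]
    have hRαβ : ν * R ^ (α+β) = m ^ (1+α/β) * ν ^ (-α/β) := by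
      rw [hR, ← Real.rpow_mul hbase.le,
        show 1/β*(α+β) = 1 + α/β from by rw [one_div, inv_mul_eq_div, add_div, div_self hβne]; exact add_comm _ _,
        Real.div_rpow hmpos.le hνpos.le, div_eq_mul_inv, ← Real.rpow_neg hνpos.le]
      calc ν * (m ^ (1+α/β) * ν ^ (-(1+α/β)))
          = m ^ (1+α/β) * (ν ^ (-(1+α/β)) * ν ^ (1:ℝ)) := by rw [Real.rpow_one]; ring
        _ = m ^ (1+α/β) * ν ^ (-α/β) := by
            rw [← Real.rpow_add hνpos, show -(1+α/β) + 1 = -α/β from by rw [neg_div]; ring]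
    calc ENNReal.ofReal |brOp n α γ f x|
        ≤ D₁ * ENNReal.ofReal (R ^ α) * M + D₂ * N * ENNReal.ofReal (R ^ (α+β)) :=
          hmaster R hRpos
      _ = D₁ * ENNReal.ofReal (R ^ α * m) + D₂ * ENNReal.ofReal (ν * R ^ (α+β)) := by
          rw [← ENNReal.ofReal_toReal hM, ← ENNReal.ofReal_toReal hNt, ← hm, ← hν,
            mul_assoc D₁, ← ENNReal.ofReal_mul (by positivity),
            mul_assoc D₂, ← ENNReal.ofReal_mul (by positivity)]
      _ = D₁ * ENNReal.ofReal (m ^ (1+α/β) * ν ^ (-α/β))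
            + D₂ * ENNReal.ofReal (m ^ (1+α/β) * ν ^ (-α/β)) := by rw [hRα, hRαβ]
      _ = D * (M ^ (1+α/β) * N ^ (-α/β)) := by
          rw [ENNReal.ofReal_mul (by positivity), ← ENNReal.ofReal_rpow_of_pos hmpos,
            ← ENNReal.ofReal_rpow_of_pos hνpos, ENNReal.ofReal_toReal hM,
            ENNReal.ofReal_toReal hNt, hD]
          ring
      _ ≤ (ENNReal.ofReal C' * e) * (M ^ (1+α/β) * N ^ (-α/β)) := mul_le_mul' hDC le_rfl
      _ = ENNReal.ofReal C' * e * N ^ (-α/β) * M ^ (1 + α/β) := by ring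

end
end

section
/- Comparison of generalized Morrey kernel norms: let 0 < α < n, γ > 0, 1 ≤ s ≤ t with n/(n+γ-α) < t < n/(n-α), t₁ > t, and define σ(R) = (1+R^{n/t₁}) R^{-n/t}. Then ‖K_{α,γ}‖_{L^{s,σ}} < ‖K_{α,γ}‖_{L^{s,t}}, where L^{s,t} corresponds to σ₀(R) = R^{-n/t}. -/
open MeasureTheory Metric ENNReal

noncomputable section

/-- Generalized Morrey norm of the Bessel-Riesz kernel (sup over all centers). -/
def kNormGen (n : ℕ) (α γ s : ℝ) (σ : ℝ → ℝ) : ℝ≥0∞ :=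
  ⨆ (R : ℝ) (_ : 0 < R) (a : En n),
    (ENNReal.ofReal (σ R))⁻¹ *
      (((ENNReal.ofReal R) ^ (n : ℝ))⁻¹ *
        ∫⁻ x in ball a R, ENNReal.ofReal (brKernel n α γ x ^ s)) ^ (1 / s)


section BRaux
open Set

lemma brq_Jscale (n : ℕ) (q : ℝ) {R : ℝ} (hR : 0 < R) :
    ∫⁻ x in ball (0 : En n) R, ENNReal.ofReal (‖x‖ ^ q) =
      ENNReal.ofReal (R ^ ((n : ℝ) + q)) * ∫⁻ x in ball (0 : En n) 1, ENNReal.ofReal (‖x‖ ^ q) := by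
  have hfr : Module.finrank ℝ (En n) = n := finrank_euclideanSpace_fin
  set f : En n → ℝ≥0∞ := (ball (0 : En n) R).indicator (fun x => ENNReal.ofReal (‖x‖ ^ q)) with hf
  have hfmeas : Measurable f :=
    Measurable.indicator (by fun_prop) measurableSet_ball
  have hRn0 : (0:ℝ) < R ^ n := by positivity
  have key : ∫⁻ x, f (R • x) = (ENNReal.ofReal (R ^ n))⁻¹ * ∫⁻ x, f x := by
    rw [← lintegral_map hfmeas (measurable_const_smul R),
      Measure.map_addHaar_smul (volume : Measure (En n)) (ne_of_gt hR),
      lintegral_smul_measure, hfr, abs_of_pos (by positivity),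
      ENNReal.ofReal_inv_of_pos hRn0, smul_eq_mul]
  have hmem : ∀ x : En n, (R • x ∈ ball (0:En n) R ↔ x ∈ ball (0:En n) 1) := by
    intro x
    simp only [mem_ball, dist_zero_right, norm_smul, Real.norm_eq_abs, abs_of_pos hR]
    rw [mul_lt_iff_lt_one_right hR]
  have hfs : ∀ x : En n, f (R • x)
      = (ball (0:En n) 1).indicator (fun x => ENNReal.ofReal (R ^ q * ‖x‖ ^ q)) x := by
    intro x
    by_cases hx : x ∈ ball (0:En n) 1
    · rw [hf, indicator_of_mem hx, indicator_of_mem ((hmem x).mpr hx), norm_smul,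
        Real.norm_eq_abs, abs_of_pos hR, Real.mul_rpow hR.le (norm_nonneg _)]
    · rw [hf, indicator_of_notMem hx, indicator_of_notMem (fun h => hx ((hmem x).mp h))]
  have hne0 : ENNReal.ofReal (R ^ n) ≠ 0 := by
    simp [ENNReal.ofReal_eq_zero, not_le, hRn0]
  calc ∫⁻ x in ball (0 : En n) R, ENNReal.ofReal (‖x‖ ^ q)
      = ∫⁻ x, f x := (lintegral_indicator measurableSet_ball _).symm
    _ = ENNReal.ofReal (R ^ n) * ∫⁻ x, f (R • x) := by
        rw [key, ← mul_assoc, ENNReal.mul_inv_cancel hne0 ENNReal.ofReal_ne_top, one_mul]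
    _ = ENNReal.ofReal (R ^ n) *
        ∫⁻ x, (ball (0:En n) 1).indicator (fun x => ENNReal.ofReal (R ^ q * ‖x‖ ^ q)) x := by
        simp_rw [hfs]
    _ = ENNReal.ofReal (R ^ n) *
        ∫⁻ x in ball (0:En n) 1, ENNReal.ofReal (R ^ q * ‖x‖ ^ q) := by
        rw [lintegral_indicator measurableSet_ball]
    _ = ENNReal.ofReal (R ^ n) * (ENNReal.ofReal (R ^ q) *
        ∫⁻ x in ball (0:En n) 1, ENNReal.ofReal (‖x‖ ^ q)) := by
        simp_rw [ENNReal.ofReal_mul (Real.rpow_nonneg hR.le q)]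
        rw [lintegral_const_mul' _ _ ENNReal.ofReal_ne_top]
    _ = ENNReal.ofReal (R ^ ((n : ℝ) + q)) * ∫⁻ x in ball (0 : En n) 1, ENNReal.ofReal (‖x‖ ^ q) := by
        rw [← mul_assoc, ← ENNReal.ofReal_mul (by positivity), ← Real.rpow_natCast R n,
          ← Real.rpow_add hR]

lemma brq_Jone_lt_top (n : ℕ) (hn : 1 ≤ n) {q : ℝ} (hq : -(n:ℝ) < q) (hq0 : q < 0) :
    ∫⁻ x in ball (0 : En n) 1, ENNReal.ofReal (‖x‖ ^ q) < ⊤ := by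
  have hne : Nonempty (Fin n) := ⟨⟨0, hn⟩⟩
  have hfr : Module.finrank ℝ (En n) = n := finrank_euclideanSpace_fin
  set c : ℝ := (1/2 : ℝ) with hc
  have hc0 : (0:ℝ) < c := by norm_num
  have hc1 : c < 1 := by norm_num
  set r : ℕ → ℝ := fun k => c ^ k with hr
  set A : ℕ → Set (En n) := fun k => ball (0 : En n) (r k) \ ball 0 (r (k+1)) with hA
  set V : ℝ≥0∞ := volume (ball (0 : En n) 1) with hV
  have hVtop : V ≠ ⊤ := measure_ball_lt_top.ne
  -- cover
  have hcover : ball (0 : En n) 1 \ {0} ⊆ ⋃ k, A k := by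
    intro x hx
    have hx1 : ‖x‖ < 1 := by simpa [mem_ball, dist_zero_right] using hx.1
    have hx0 : 0 < ‖x‖ := by
      have : x ≠ 0 := by simpa using hx.2
      simpa [norm_pos_iff] using this
    have hex : ∃ k : ℕ, r (k+1) ≤ ‖x‖ := by
      obtain ⟨k, hk⟩ := exists_pow_lt_of_lt_one hx0 hc1
      exact ⟨k, le_trans (by
        show c ^ (k+1) ≤ c ^ k
        rw [pow_succ]
        calc c ^ k * c ≤ c ^ k * 1 := by nlinarith [pow_pos hc0 k]
          _ = c ^ k := mul_one _) hk.le⟩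
    set k₀ := Nat.find hex with hk₀def
    have hk₀ : r (k₀+1) ≤ ‖x‖ := Nat.find_spec hex
    have hup : ‖x‖ < r k₀ := by
      rcases Nat.eq_zero_or_pos k₀ with h0 | hpos
      · rw [h0]; simpa [hr] using hx1
      · obtain ⟨m, hm⟩ := Nat.exists_eq_succ_of_ne_zero hpos.ne'
        have := Nat.find_min hex (by omega : m < k₀)
        rw [hm]
        exact lt_of_not_ge (by simpa [hm] using this)
    exact mem_iUnion.mpr ⟨k₀, ⟨by simpa [mem_ball, dist_zero_right] using hup,
      by simp [mem_ball, dist_zero_right, not_lt, hk₀]⟩⟩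
  -- each piece
  have hpiece : ∀ k : ℕ, ∫⁻ x in A k, ENNReal.ofReal (‖x‖ ^ q)
      ≤ (ENNReal.ofReal (c ^ q) * V) * (ENNReal.ofReal (c ^ ((n:ℝ) + q))) ^ k := by
    intro k
    have hrk0 : (0:ℝ) < r k := pow_pos hc0 k
    have hstep : ∫⁻ x in A k, ENNReal.ofReal (‖x‖ ^ q)
        ≤ ENNReal.ofReal (r (k+1) ^ q) * volume (A k) := by
      rw [← setLIntegral_const (A k) _]
      refine setLIntegral_mono' (measurableSet_ball.diff measurableSet_ball) ?_
      intro x hx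
      have hxlb : r (k+1) ≤ ‖x‖ := by
        have := hx.2
        simpa [mem_ball, dist_zero_right, not_lt] using this
      exact ENNReal.ofReal_le_ofReal
        (Real.rpow_le_rpow_of_nonpos (pow_pos hc0 (k+1)) hxlb hq0.le)
    have hAm : volume (A k) ≤ ENNReal.ofReal (r k ^ n) * V := by
      calc volume (A k) ≤ volume (ball (0 : En n) (r k)) := measure_mono diff_subset
        _ = ENNReal.ofReal (r k ^ n) * V := by
            rw [Measure.addHaar_ball _ _ hrk0.le, hfr]
    have hconst : ENNReal.ofReal (r (k+1) ^ q) * (ENNReal.ofReal (r k ^ n) * V)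
        = (ENNReal.ofReal (c ^ q) * V) * (ENNReal.ofReal (c ^ ((n:ℝ) + q))) ^ k := by
      have hreal : r (k+1) ^ q * r k ^ n = c ^ q * (c ^ ((n:ℝ) + q)) ^ k := by
        show (c ^ (k+1) : ℝ) ^ q * ((c ^ k : ℝ)) ^ (n:ℕ) = c ^ q * (c ^ ((n:ℝ) + q)) ^ k
        rw [ ← Real.rpow_natCast c (k+1), ← Real.rpow_natCast c k,
          ← Real.rpow_mul hc0.le, ← Real.rpow_natCast ((c : ℝ) ^ ((k:ℝ))) n,
          ← Real.rpow_mul hc0.le, ← Real.rpow_add hc0,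
          ← Real.rpow_natCast (c ^ ((n:ℝ) + q)) k, ← Real.rpow_mul hc0.le,
          ← Real.rpow_add hc0]
        rw [show ((k+1:ℕ):ℝ) * q + (k:ℝ) * (n:ℕ) = q + ((n:ℝ)+q) * k by push_cast; ring]
      calc ENNReal.ofReal (r (k+1) ^ q) * (ENNReal.ofReal (r k ^ n) * V)
          = ENNReal.ofReal (r (k+1) ^ q * r k ^ n) * V := by
            rw [← mul_assoc, ← ENNReal.ofReal_mul (Real.rpow_nonneg (pow_pos hc0 (k+1)).le q)]
        _ = ENNReal.ofReal (c ^ q * (c ^ ((n:ℝ) + q)) ^ k) * V := by rw [hreal]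
        _ = (ENNReal.ofReal (c ^ q) * V) * (ENNReal.ofReal (c ^ ((n:ℝ) + q))) ^ k := by
            rw [ENNReal.ofReal_mul (Real.rpow_nonneg hc0.le q),
              ENNReal.ofReal_pow (Real.rpow_nonneg hc0.le _)]
            ring
    calc ∫⁻ x in A k, ENNReal.ofReal (‖x‖ ^ q)
        ≤ ENNReal.ofReal (r (k+1) ^ q) * volume (A k) := hstep
      _ ≤ ENNReal.ofReal (r (k+1) ^ q) * (ENNReal.ofReal (r k ^ n) * V) :=
          mul_le_mul_right hAm _
      _ = _ := hconst
  -- sum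
  have hgeo : ENNReal.ofReal (c ^ ((n:ℝ) + q)) < 1 := by
    rw [← ENNReal.ofReal_one]
    exact ENNReal.ofReal_lt_ofReal_iff_of_nonneg (Real.rpow_nonneg hc0.le _) |>.mpr
      (Real.rpow_lt_one hc0.le hc1 (by linarith))
  have hzero : volume ({(0 : En n)} : Set (En n)) = 0 := measure_singleton _
  calc ∫⁻ x in ball (0 : En n) 1, ENNReal.ofReal (‖x‖ ^ q)
      ≤ ∫⁻ x in (ball (0 : En n) 1 \ {0}) ∪ {0}, ENNReal.ofReal (‖x‖ ^ q) := by
        refine lintegral_mono_set ?_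
        intro x hx
        by_cases h : x = 0
        · exact Or.inr (by simp [h])
        · exact Or.inl ⟨hx, by simp [h]⟩
    _ ≤ (∫⁻ x in ball (0 : En n) 1 \ {0}, ENNReal.ofReal (‖x‖ ^ q))
        + ∫⁻ x in ({0} : Set (En n)), ENNReal.ofReal (‖x‖ ^ q) := lintegral_union_le _ _ _
    _ = ∫⁻ x in ball (0 : En n) 1 \ {0}, ENNReal.ofReal (‖x‖ ^ q) := by
        rw [setLIntegral_measure_zero _ _ hzero, add_zero]
    _ ≤ ∫⁻ x in ⋃ k, A k, ENNReal.ofReal (‖x‖ ^ q) := lintegral_mono_set hcover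
    _ ≤ ∑' k, ∫⁻ x in A k, ENNReal.ofReal (‖x‖ ^ q) := lintegral_iUnion_le _ _
    _ ≤ ∑' k : ℕ, (ENNReal.ofReal (c ^ q) * V) * (ENNReal.ofReal (c ^ ((n:ℝ) + q))) ^ k :=
        ENNReal.tsum_le_tsum hpiece
    _ = (ENNReal.ofReal (c ^ q) * V) * (1 - ENNReal.ofReal (c ^ ((n:ℝ) + q)))⁻¹ := by
        rw [ENNReal.tsum_mul_left, ENNReal.tsum_geometric]
    _ < ⊤ := by
        refine mul_lt_top (mul_lt_top ENNReal.ofReal_lt_top hVtop.lt_top) ?_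
        rw [ENNReal.inv_lt_top]
        exact tsub_pos_iff_lt.mpr hgeo

lemma brq_ball_bound (n : ℕ) (hn : 1 ≤ n) {q : ℝ} (hq1 : -(n:ℝ) < q) (hq2 : q < 0) :
    ∃ C : ℝ≥0∞, C ≠ ⊤ ∧ ∀ R : ℝ, 0 < R → ∀ a : En n,
      ∫⁻ x in ball a R, ENNReal.ofReal (‖x‖ ^ q) ≤ C * ENNReal.ofReal (R ^ ((n:ℝ) + q)) := by
  have hne : Nonempty (Fin n) := ⟨⟨0, hn⟩⟩
  have hfr : Module.finrank ℝ (En n) = n := finrank_euclideanSpace_fin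
  set J : ℝ≥0∞ := ∫⁻ x in ball (0 : En n) 1, ENNReal.ofReal (‖x‖ ^ q) with hJ
  have hJtop : J ≠ ⊤ := (brq_Jone_lt_top n hn hq1 hq2).ne
  set V : ℝ≥0∞ := volume (ball (0 : En n) 1) with hV
  have hVtop : V ≠ ⊤ := measure_ball_lt_top.ne
  refine ⟨ENNReal.ofReal ((3:ℝ) ^ ((n:ℝ) + q)) * J + V, by
    exact ENNReal.add_ne_top.mpr ⟨ENNReal.mul_ne_top ENNReal.ofReal_ne_top hJtop, hVtop⟩, ?_⟩
  intro R hR a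
  by_cases ha : ‖a‖ ≤ 2 * R
  · have hsub : ball a R ⊆ ball (0 : En n) (3 * R) := by
      intro x hx
      have h1 : dist x 0 ≤ dist x a + dist a 0 := dist_triangle _ _ _
      have h2 : dist x a < R := mem_ball.mp hx
      have h3 : dist a 0 = ‖a‖ := by simp
      have : dist x 0 < 3 * R := by rw [h3] at h1; linarith
      exact mem_ball.mpr (by simpa using this)
    calc ∫⁻ x in ball a R, ENNReal.ofReal (‖x‖ ^ q)
        ≤ ∫⁻ x in ball (0 : En n) (3 * R), ENNReal.ofReal (‖x‖ ^ q) := lintegral_mono_set hsub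
      _ = ENNReal.ofReal ((3 * R) ^ ((n:ℝ) + q)) * J := brq_Jscale n q (by linarith)
      _ = (ENNReal.ofReal ((3:ℝ) ^ ((n:ℝ) + q)) * J) * ENNReal.ofReal (R ^ ((n:ℝ) + q)) := by
          rw [Real.mul_rpow (by norm_num) hR.le,
            ENNReal.ofReal_mul (Real.rpow_nonneg (by norm_num) _)]
          ring
      _ ≤ (ENNReal.ofReal ((3:ℝ) ^ ((n:ℝ) + q)) * J + V) * ENNReal.ofReal (R ^ ((n:ℝ) + q)) :=
          mul_le_mul_left le_self_add _
  · have hpt : ∀ x ∈ ball a R, ENNReal.ofReal (‖x‖ ^ q) ≤ ENNReal.ofReal (R ^ q) := by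
      intro x hx
      have h2 : dist x a < R := mem_ball.mp hx
      have h3 : ‖a‖ - ‖x‖ ≤ dist x a := by
        have := abs_norm_sub_norm_le a x
        rw [← dist_eq_norm a x, dist_comm a x] at this
        exact le_trans (le_abs_self _) (by simpa using this)
      have hxR : R ≤ ‖x‖ := by push_neg at ha; linarith
      exact ENNReal.ofReal_le_ofReal (Real.rpow_le_rpow_of_nonpos hR hxR hq2.le)
    calc ∫⁻ x in ball a R, ENNReal.ofReal (‖x‖ ^ q)
        ≤ ∫⁻ _x in ball a R, ENNReal.ofReal (R ^ q) := setLIntegral_mono' measurableSet_ball hpt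
      _ = ENNReal.ofReal (R ^ q) * volume (ball a R) := setLIntegral_const _ _
      _ = ENNReal.ofReal (R ^ q) * (ENNReal.ofReal (R ^ (n:ℕ)) * V) := by
          rw [Measure.addHaar_ball _ _ hR.le, hfr]
      _ = V * ENNReal.ofReal (R ^ ((n:ℝ) + q)) := by
          rw [← Real.rpow_natCast R n, ← mul_assoc,
            ← ENNReal.ofReal_mul (Real.rpow_nonneg hR.le q), ← Real.rpow_add hR]
          rw [show q + (n:ℝ) = (n:ℝ) + q by ring]
          ring
      _ ≤ (ENNReal.ofReal ((3:ℝ) ^ ((n:ℝ) + q)) * J + V) * ENNReal.ofReal (R ^ ((n:ℝ) + q)) :=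
          mul_le_mul_left le_add_self _

lemma brq_kernel_nonneg (n : ℕ) (α γ : ℝ) (x : En n) : 0 ≤ brKernel n α γ x := by
  unfold brKernel
  have := norm_nonneg x
  positivity

lemma brq_kernel_le_near (n : ℕ) {α γ s : ℝ} (hγ : 0 < γ) (hs : 0 ≤ s) (x : En n) :
    brKernel n α γ x ^ s ≤ ‖x‖ ^ ((α - n) * s) := by
  have h1 : brKernel n α γ x ≤ ‖x‖ ^ (α - n) := by
    unfold brKernel
    refine div_le_self (Real.rpow_nonneg (norm_nonneg x) _) ?_
    exact Real.one_le_rpow (by linarith [norm_nonneg x]) hγ.le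
  calc brKernel n α γ x ^ s ≤ (‖x‖ ^ (α - n)) ^ s :=
        Real.rpow_le_rpow (brq_kernel_nonneg n α γ x) h1 hs
    _ = ‖x‖ ^ ((α - n) * s) := (Real.rpow_mul (norm_nonneg x) _ _).symm

lemma brq_kernel_le_far (n : ℕ) {α γ s : ℝ} (hαn : α < n) (hγ : 0 < γ) (hs : 0 < s)
    (x : En n) : brKernel n α γ x ^ s ≤ ‖x‖ ^ ((α - n - γ) * s) := by
  rcases eq_or_ne x 0 with rfl | hx
  · have h0 : brKernel n α γ (0 : En n) = 0 := by
      unfold brKernel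
      rw [norm_zero, Real.zero_rpow (by linarith : α - (n:ℝ) ≠ 0), zero_div]
    rw [h0, Real.zero_rpow hs.ne']
    exact Real.rpow_nonneg (norm_nonneg _) _
  · have hx0 : 0 < ‖x‖ := norm_pos_iff.mpr hx
    have h1 : brKernel n α γ x ≤ ‖x‖ ^ (α - n - γ) := by
      unfold brKernel
      have hb : ‖x‖ ^ γ ≤ (1 + ‖x‖) ^ γ :=
        Real.rpow_le_rpow hx0.le (by linarith) hγ.le
      calc ‖x‖ ^ (α - n) / (1 + ‖x‖) ^ γ ≤ ‖x‖ ^ (α - n) / ‖x‖ ^ γ :=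
            div_le_div_of_nonneg_left (Real.rpow_nonneg hx0.le _) (Real.rpow_pos_of_pos hx0 _) hb
        _ = ‖x‖ ^ (α - n - γ) := by rw [← Real.rpow_sub hx0]
    calc brKernel n α γ x ^ s ≤ (‖x‖ ^ (α - n - γ)) ^ s :=
          Real.rpow_le_rpow (brq_kernel_nonneg n α γ x) h1 hs.le
      _ = ‖x‖ ^ ((α - n - γ) * s) := (Real.rpow_mul (norm_nonneg x) _ _).symm

lemma brq_phi_le (n : ℕ) {s R : ℝ} (hs : 0 < s) (hR : 0 < R) {I C : ℝ≥0∞} {u nt : ℝ}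
    (hI : I ≤ C * ENNReal.ofReal (R ^ u)) :
    (ENNReal.ofReal (R ^ (-nt)))⁻¹ *
      (((ENNReal.ofReal R) ^ (n:ℝ))⁻¹ * I) ^ (1/s)
      ≤ C ^ (1/s) * (ENNReal.ofReal R) ^ (nt + (u - n)/s) := by
  have h1s : (0:ℝ) ≤ 1/s := (one_div_nonneg).mpr hs.le
  have hx0 : ENNReal.ofReal R ≠ 0 := by simp [ENNReal.ofReal_eq_zero, not_le, hR]
  have hxt : ENNReal.ofReal R ≠ ⊤ := ENNReal.ofReal_ne_top
  have e1 : (ENNReal.ofReal (R ^ (-nt)))⁻¹ = ENNReal.ofReal R ^ nt := by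
    rw [← ENNReal.ofReal_rpow_of_pos hR, ENNReal.rpow_neg, inv_inv]
  have e2 : ((ENNReal.ofReal R) ^ (n:ℝ))⁻¹ = ENNReal.ofReal R ^ (-(n:ℝ)) :=
    (ENNReal.rpow_neg _ _).symm
  have e3 : ENNReal.ofReal (R ^ u) = ENNReal.ofReal R ^ u := (ENNReal.ofReal_rpow_of_pos hR).symm
  calc (ENNReal.ofReal (R ^ (-nt)))⁻¹ * (((ENNReal.ofReal R) ^ (n:ℝ))⁻¹ * I) ^ (1/s)
      ≤ ENNReal.ofReal R ^ nt *
        ((ENNReal.ofReal R ^ (-(n:ℝ))) * (C * ENNReal.ofReal R ^ u)) ^ (1/s) := by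
        rw [e1, e2]
        exact mul_le_mul_right
          (ENNReal.rpow_le_rpow (mul_le_mul_right (by rw [← e3]; exact hI) _) h1s) _
    _ = ENNReal.ofReal R ^ nt * (C * ENNReal.ofReal R ^ (u - (n:ℝ))) ^ (1/s) := by
        rw [show ENNReal.ofReal R ^ (-(n:ℝ)) * (C * ENNReal.ofReal R ^ u)
            = C * (ENNReal.ofReal R ^ u * ENNReal.ofReal R ^ (-(n:ℝ))) by ring,
          ← ENNReal.rpow_add _ _ hx0 hxt, show u + -(n:ℝ) = u - (n:ℝ) by ring]
    _ = ENNReal.ofReal R ^ nt * (C ^ (1/s) * ENNReal.ofReal R ^ ((u - (n:ℝ))/s)) := by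
        rw [ENNReal.mul_rpow_of_nonneg _ _ h1s, ← ENNReal.rpow_mul, mul_one_div]
    _ = C ^ (1/s) * (ENNReal.ofReal R) ^ (nt + (u - (n:ℝ))/s) := by
        rw [ENNReal.rpow_add _ _ hx0 hxt]; ring

lemma brq_I_large (n : ℕ) (hn : 1 ≤ n) {α γ s t : ℝ}
    (hα0 : 0 < α) (hαn : α < n) (hγ : 0 < γ) (hs1 : 1 ≤ s) (hst : s ≤ t)
    (ht0 : 0 < t) (hnt : (n:ℝ)/t < (n:ℝ) + γ - α) (hp : -(n:ℝ) < (α - n) * s) :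
    ∃ D : ℝ≥0∞, D ≠ ⊤ ∧ ∃ β : ℝ, (n:ℝ)/t ≤ β/s ∧ β ≤ n ∧
      ∀ R : ℝ, 1 ≤ R → ∀ a : En n,
        ∫⁻ x in ball a R, ENNReal.ofReal (brKernel n α γ x ^ s)
          ≤ D * ENNReal.ofReal (R ^ ((n:ℝ) - β)) := by
  have hs0 : (0:ℝ) < s := lt_of_lt_of_le one_pos hs1
  have hfr : Module.finrank ℝ (En n) = n := finrank_euclideanSpace_fin
  set b : ℝ := ((n:ℝ) - α + γ) * s with hb
  have hbpos : 0 < b := by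
    have : (0:ℝ) < (n:ℝ) - α + γ := by linarith
    positivity
  have hbs : b / s = (n:ℝ) - α + γ := by field_simp; rw [hb]; ring
  have hnb : (n:ℝ)/t < b/s := by rw [hbs]; linarith
  have hfarpt : ∀ x : En n, brKernel n α γ x ^ s ≤ ‖x‖ ^ (-b) := by
    intro x
    have := brq_kernel_le_far n hαn hγ hs0 x
    rwa [show (α - (n:ℝ) - γ) * s = -b by rw [hb]; ring] at this
  set J : ℝ≥0∞ := ∫⁻ x in ball (0 : En n) 1, ENNReal.ofReal (‖x‖ ^ ((α - (n:ℝ)) * s)) with hJ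
  have hJtop : J ≠ ⊤ := (brq_Jone_lt_top n hn hp (by nlinarith)).ne
  -- near piece bound, for any R ≥ 1, any a
  have hnear : ∀ R : ℝ, 1 ≤ R → ∀ a : En n,
      ∫⁻ x in ball a R ∩ ball (0 : En n) 1, ENNReal.ofReal (brKernel n α γ x ^ s) ≤ J := by
    intro R hR a
    calc ∫⁻ x in ball a R ∩ ball (0 : En n) 1, ENNReal.ofReal (brKernel n α γ x ^ s)
        ≤ ∫⁻ x in ball (0 : En n) 1, ENNReal.ofReal (brKernel n α γ x ^ s) :=
          lintegral_mono_set inter_subset_right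
      _ ≤ J := lintegral_mono fun x =>
          ENNReal.ofReal_le_ofReal (brq_kernel_le_near n hγ hs0.le x)
  by_cases hbn : b ≤ n
  · -- choose β strictly between n*s/t and b
    set β : ℝ := ((n:ℝ) * s / t + b) / 2 with hβ
    have hβs : β / s = ((n:ℝ)/t + b/s) / 2 := by
      have e1 : (n:ℝ)*s/t/s = (n:ℝ)/t := by rw [div_div, mul_div_mul_right _ _ hs0.ne']
      rw [hβ, div_right_comm, add_div, e1]
    have h1 : (n:ℝ)/t ≤ β/s := by rw [hβs]; linarith
    have h2 : β/s < b/s := by rw [hβs]; linarith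
    have hβb : β < b := by
      have := (div_lt_div_iff_of_pos_right hs0).mp h2
      exact this
    have hβn : β < n := lt_of_lt_of_le hβb hbn
    have hβ0 : 0 < β := by
      have hns : 0 < (n:ℝ) * s / t := by
        have hn0 : (0:ℝ) < n := by exact_mod_cast hn
        positivity
      rw [hβ]; linarith
    obtain ⟨C, hCtop, hC⟩ := brq_ball_bound n hn (q := -β) (by linarith) (by linarith)
    refine ⟨J + C, ENNReal.add_ne_top.mpr ⟨hJtop, hCtop⟩, β, h1, hβn.le, ?_⟩
    intro R hR a
    have hfar : ∫⁻ x in ball a R \ ball (0 : En n) 1, ENNReal.ofReal (brKernel n α γ x ^ s)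
        ≤ C * ENNReal.ofReal (R ^ ((n:ℝ) - β)) := by
      have hptwise : ∀ x ∈ ball a R \ ball (0 : En n) 1,
          ENNReal.ofReal (brKernel n α γ x ^ s) ≤ ENNReal.ofReal (‖x‖ ^ (-β)) := by
        intro x hx
        have hx1 : 1 ≤ ‖x‖ := by
          have := hx.2
          simpa [mem_ball, dist_zero_right, not_lt] using this
        refine ENNReal.ofReal_le_ofReal (le_trans (hfarpt x) ?_)
        exact Real.rpow_le_rpow_of_exponent_le hx1 (by linarith)
      calc ∫⁻ x in ball a R \ ball (0 : En n) 1, ENNReal.ofReal (brKernel n α γ x ^ s)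
          ≤ ∫⁻ x in ball a R \ ball (0 : En n) 1, ENNReal.ofReal (‖x‖ ^ (-β)) :=
            setLIntegral_mono' (measurableSet_ball.diff measurableSet_ball) hptwise
        _ ≤ ∫⁻ x in ball a R, ENNReal.ofReal (‖x‖ ^ (-β)) := lintegral_mono_set diff_subset
        _ ≤ C * ENNReal.ofReal (R ^ ((n:ℝ) + -β)) := hC R (by linarith) a
        _ = C * ENNReal.ofReal (R ^ ((n:ℝ) - β)) := by rw [show (n:ℝ) + -β = (n:ℝ) - β by ring]
    have hone : (1:ℝ≥0∞) ≤ ENNReal.ofReal (R ^ ((n:ℝ) - β)) := by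
      rw [← ENNReal.ofReal_one]
      exact ENNReal.ofReal_le_ofReal (Real.one_le_rpow hR (by linarith))
    calc ∫⁻ x in ball a R, ENNReal.ofReal (brKernel n α γ x ^ s)
        = ∫⁻ x in (ball a R ∩ ball (0 : En n) 1) ∪ (ball a R \ ball (0 : En n) 1),
            ENNReal.ofReal (brKernel n α γ x ^ s) := by rw [inter_union_diff]
      _ ≤ (∫⁻ x in ball a R ∩ ball (0 : En n) 1, ENNReal.ofReal (brKernel n α γ x ^ s))
          + ∫⁻ x in ball a R \ ball (0 : En n) 1, ENNReal.ofReal (brKernel n α γ x ^ s) :=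
          lintegral_union_le _ _ _
      _ ≤ J * ENNReal.ofReal (R ^ ((n:ℝ) - β)) + C * ENNReal.ofReal (R ^ ((n:ℝ) - β)) := by
          exact add_le_add (le_trans (hnear R hR a) (le_mul_of_one_le_right' hone)) hfar
      _ = (J + C) * ENNReal.ofReal (R ^ ((n:ℝ) - β)) := (add_mul _ _ _).symm
  · -- b > n : integrable tail on the whole space
    push_neg at hbn
    have htail : ∫⁻ x : En n, ENNReal.ofReal ((1 + ‖x‖) ^ (-b)) < ⊤ := by
      have := finite_integral_one_add_norm (E := En n) (μ := volume) (r := b) (by rw [hfr]; exact hbn)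
      exact this
    set C4 : ℝ≥0∞ := ENNReal.ofReal ((2:ℝ) ^ b) * ∫⁻ x : En n, ENNReal.ofReal ((1 + ‖x‖) ^ (-b))
      with hC4
    have hC4top : C4 ≠ ⊤ := ENNReal.mul_ne_top ENNReal.ofReal_ne_top htail.ne
    refine ⟨J + C4, ENNReal.add_ne_top.mpr ⟨hJtop, hC4top⟩, (n:ℝ), ?_, le_rfl, ?_⟩
    · exact div_le_div_of_nonneg_left (by positivity) hs0 hst
    intro R hR a
    have hfar : ∫⁻ x in ball a R \ ball (0 : En n) 1, ENNReal.ofReal (brKernel n α γ x ^ s)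
        ≤ C4 := by
      have hptwise : ∀ x ∈ ball a R \ ball (0 : En n) 1,
          ENNReal.ofReal (brKernel n α γ x ^ s)
            ≤ ENNReal.ofReal ((2:ℝ) ^ b) * ENNReal.ofReal ((1 + ‖x‖) ^ (-b)) := by
        intro x hx
        have hx1 : 1 ≤ ‖x‖ := by
          have := hx.2
          simpa [mem_ball, dist_zero_right, not_lt] using this
        have hkey : ‖x‖ ^ (-b) ≤ (2:ℝ) ^ b * (1 + ‖x‖) ^ (-b) := by
          have h12 : 1 + ‖x‖ ≤ 2 * ‖x‖ := by linarith
          have := Real.rpow_le_rpow_of_nonpos (by linarith : (0:ℝ) < 1 + ‖x‖) h12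
            (by linarith : -b ≤ 0)
          have hmul : ((2:ℝ) * ‖x‖) ^ (-b) = (2:ℝ)^(-b) * ‖x‖ ^ (-b) :=
            Real.mul_rpow (by norm_num) (by linarith)
          rw [hmul] at this
          calc ‖x‖ ^ (-b) = (2:ℝ)^b * ((2:ℝ)^(-b) * ‖x‖ ^ (-b)) := by
                rw [← mul_assoc, ← Real.rpow_add (by norm_num : (0:ℝ) < 2),
                  add_neg_cancel, Real.rpow_zero, one_mul]
            _ ≤ (2:ℝ)^b * (1 + ‖x‖) ^ (-b) := by
                exact mul_le_mul_of_nonneg_left this (Real.rpow_nonneg (by norm_num) _)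
        rw [← ENNReal.ofReal_mul (Real.rpow_nonneg (by norm_num) _)]
        exact ENNReal.ofReal_le_ofReal (le_trans (hfarpt x) hkey)
      calc ∫⁻ x in ball a R \ ball (0 : En n) 1, ENNReal.ofReal (brKernel n α γ x ^ s)
          ≤ ∫⁻ x in ball a R \ ball (0 : En n) 1,
              ENNReal.ofReal ((2:ℝ) ^ b) * ENNReal.ofReal ((1 + ‖x‖) ^ (-b)) :=
            setLIntegral_mono' (measurableSet_ball.diff measurableSet_ball) hptwise
        _ = ENNReal.ofReal ((2:ℝ) ^ b) *
            ∫⁻ x in ball a R \ ball (0 : En n) 1, ENNReal.ofReal ((1 + ‖x‖) ^ (-b)) :=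
            lintegral_const_mul' _ _ ENNReal.ofReal_ne_top
        _ ≤ C4 := by
            rw [hC4]
            exact mul_le_mul_right (setLIntegral_le_lintegral _ _) _
    have hone : (1:ℝ≥0∞) ≤ ENNReal.ofReal (R ^ ((n:ℝ) - (n:ℝ))) := by
      rw [← ENNReal.ofReal_one]
      exact ENNReal.ofReal_le_ofReal (Real.one_le_rpow hR (by linarith))
    calc ∫⁻ x in ball a R, ENNReal.ofReal (brKernel n α γ x ^ s)
        = ∫⁻ x in (ball a R ∩ ball (0 : En n) 1) ∪ (ball a R \ ball (0 : En n) 1),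
            ENNReal.ofReal (brKernel n α γ x ^ s) := by rw [inter_union_diff]
      _ ≤ (∫⁻ x in ball a R ∩ ball (0 : En n) 1, ENNReal.ofReal (brKernel n α γ x ^ s))
          + ∫⁻ x in ball a R \ ball (0 : En n) 1, ENNReal.ofReal (brKernel n α γ x ^ s) :=
          lintegral_union_le _ _ _
      _ ≤ J * ENNReal.ofReal (R ^ ((n:ℝ) - (n:ℝ))) + C4 * ENNReal.ofReal (R ^ ((n:ℝ) - (n:ℝ))) := by
          refine add_le_add (le_trans (hnear R hR a) (le_mul_of_one_le_right' hone)) ?_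
          exact le_trans hfar (le_mul_of_one_le_right' hone)
      _ = (J + C4) * ENNReal.ofReal (R ^ ((n:ℝ) - (n:ℝ))) := (add_mul _ _ _).symm

lemma brq_Ipos (n : ℕ) (hn : 1 ≤ n) {α γ s : ℝ} (hαn : α < n) (hγ : 0 < γ) (hs1 : 1 ≤ s) :
    0 < ∫⁻ x in ball (0 : En n) 1, ENNReal.ofReal (brKernel n α γ x ^ s) := by
  have hne : Nonempty (Fin n) := ⟨⟨0, hn⟩⟩
  have hfr : Module.finrank ℝ (En n) = n := finrank_euclideanSpace_fin
  set S : Set (En n) := ball 0 1 \ ball 0 (1/2) with hS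
  set cR : ℝ := (((2:ℝ) ^ γ)⁻¹) ^ s with hcR
  have hcR0 : 0 < cR := by
    have : (0:ℝ) < ((2:ℝ) ^ γ)⁻¹ := by positivity
    positivity
  have hpt : ∀ x ∈ S, ENNReal.ofReal cR ≤ ENNReal.ofReal (brKernel n α γ x ^ s) := by
    intro x hx
    have hx1 : ‖x‖ < 1 := by simpa [mem_ball, dist_zero_right] using hx.1
    have hx2 : (1/2 : ℝ) ≤ ‖x‖ := by
      have := hx.2; simpa [mem_ball, dist_zero_right, not_lt] using this
    have hx0 : (0:ℝ) < ‖x‖ := by linarith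
    have hA : 1 ≤ ‖x‖ ^ (α - (n:ℝ)) :=
      Real.one_le_rpow_of_pos_of_le_one_of_nonpos hx0 hx1.le (by linarith)
    have hBpos : (0:ℝ) < (1 + ‖x‖) ^ γ := by positivity
    have hB : (1 + ‖x‖) ^ γ ≤ (2:ℝ) ^ γ :=
      Real.rpow_le_rpow (by linarith) (by linarith) hγ.le
    have hK : ((2:ℝ) ^ γ)⁻¹ ≤ brKernel n α γ x := by
      have h1 : 1/((2:ℝ) ^ γ) ≤ 1/((1 + ‖x‖) ^ γ) := one_div_le_one_div_of_le hBpos hB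
      have h2 : 1/((1 + ‖x‖) ^ γ) ≤ ‖x‖ ^ (α - (n:ℝ)) / (1 + ‖x‖) ^ γ := by
        gcongr
      unfold brKernel
      rw [inv_eq_one_div]
      exact h1.trans h2
    refine ENNReal.ofReal_le_ofReal ?_
    rw [hcR]
    exact Real.rpow_le_rpow (by positivity) hK (by linarith)
  have hSmeas : MeasurableSet S := measurableSet_ball.diff measurableSet_ball
  have hSpos : 0 < volume S := by
    have hV0 : 0 < volume (ball (0 : En n) 1) := measure_ball_pos _ _ one_pos
    have hVtop : volume (ball (0 : En n) 1) ≠ ⊤ := measure_ball_lt_top.ne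
    have hmd : volume S = volume (ball (0 : En n) 1) - volume (ball (0 : En n) (1/2)) :=
      measure_diff (ball_subset_ball (by norm_num)) measurableSet_ball.nullMeasurableSet
        (ne_top_of_le_ne_top hVtop (measure_mono (ball_subset_ball (by norm_num))))
    rw [hmd, tsub_pos_iff_lt]
    have : volume (ball (0 : En n) (1/2)) = ENNReal.ofReal ((1/2 : ℝ) ^ n) *
        volume (ball (0 : En n) 1) := by
      rw [Measure.addHaar_ball _ _ (by norm_num : (0:ℝ) ≤ 1/2), hfr]
    rw [this]
    calc ENNReal.ofReal ((1/2 : ℝ) ^ n) * volume (ball (0 : En n) 1)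
        < 1 * volume (ball (0 : En n) 1) := by
          refine ENNReal.mul_lt_mul_left hV0.ne' hVtop ?_
          rw [← ENNReal.ofReal_one]
          exact (ENNReal.ofReal_lt_ofReal_iff_of_nonneg (by positivity)).mpr
            (pow_lt_one₀ (by norm_num) (by norm_num) (by omega))
      _ = volume (ball (0 : En n) 1) := one_mul _
  calc (0:ℝ≥0∞) < ENNReal.ofReal cR * volume S := by
        exact ENNReal.mul_pos (by simp [ENNReal.ofReal_eq_zero, not_le, hcR0]) hSpos.ne'
    _ = ∫⁻ _x in S, ENNReal.ofReal cR := (setLIntegral_const _ _).symm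
    _ ≤ ∫⁻ x in S, ENNReal.ofReal (brKernel n α γ x ^ s) := setLIntegral_mono' hSmeas hpt
    _ ≤ ∫⁻ x in ball (0 : En n) 1, ENNReal.ofReal (brKernel n α γ x ^ s) :=
        lintegral_mono_set diff_subset

end BRaux

/-- comparison of generalized Morrey kernel norms, where
`σ(R) = (1+R^{n/t₁})R^{-n/t}` and `σ₀(R) = R^{-n/t}`. -/
theorem besselRiesz_kernel_norm_lt (n : ℕ) (hn : 1 ≤ n) (α γ s t t₁ : ℝ)
    (hα0 : 0 < α) (hαn : α < n) (hγ : 0 < γ)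
    (hs1 : 1 ≤ s) (hst : s ≤ t)
    (ht1 : (n : ℝ) / ((n : ℝ) + γ - α) < t) (ht2 : t < (n : ℝ) / ((n : ℝ) - α))
    (htt₁ : t < t₁) :
    kNormGen n α γ s (fun R => (1 + R ^ ((n : ℝ) / t₁)) * R ^ (-((n : ℝ) / t))) <
      kNormGen n α γ s (fun R => R ^ (-((n : ℝ) / t))) := by
  have hne : Nonempty (Fin n) := ⟨⟨0, hn⟩⟩
  have hn0 : (0:ℝ) < n := by exact_mod_cast hn
  have hs0 : (0:ℝ) < s := lt_of_lt_of_le one_pos hs1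
  have hnγα : (0:ℝ) < (n:ℝ) + γ - α := by linarith
  have hnα : (0:ℝ) < (n:ℝ) - α := by linarith
  have ht0 : (0:ℝ) < t := lt_trans (div_pos hn0 hnγα) ht1
  have ht₁0 : (0:ℝ) < t₁ := ht0.trans htt₁
  have hnt10 : (0:ℝ) ≤ (n:ℝ)/t₁ := by positivity
  have hnt : (n:ℝ)/t < (n:ℝ) + γ - α := by
    rw [div_lt_iff₀ ht0]
    have h := (div_lt_iff₀ hnγα).mp ht1
    nlinarith
  have hεpos : 0 < (n:ℝ)/t + α - n := by
    have h1 : t * ((n:ℝ) - α) < n := by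
      have := (lt_div_iff₀ hnα).mp ht2
      linarith
    have h2 : (n:ℝ) - α < n/t := by rw [lt_div_iff₀ ht0]; linarith
    linarith
  have hp : -(n:ℝ) < (α - n) * s := by
    have h2 : ((n:ℝ) - α) * t < n := by
      have := (lt_div_iff₀ hnα).mp ht2; nlinarith
    nlinarith
  -- notation
  set I : ℝ → En n → ℝ≥0∞ := fun R a =>
    ∫⁻ x in ball a R, ENNReal.ofReal (brKernel n α γ x ^ s) with hI
  set Φ : ℝ → En n → ℝ≥0∞ := fun R a =>
    (ENNReal.ofReal (R ^ (-((n:ℝ)/t))))⁻¹ *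
      (((ENNReal.ofReal R) ^ (n:ℝ))⁻¹ * I R a) ^ (1/s) with hΦ
  set L : ℝ≥0∞ := ⨆ (R : ℝ) (_ : 0 < R) (a : En n), Φ R a with hL
  have hRHSL : kNormGen n α γ s (fun R => R ^ (-((n : ℝ) / t))) = L := rfl
  -- small-R bound
  obtain ⟨Cp, hCpTop, hCp⟩ := brq_ball_bound n hn (q := (α - n)*s) hp (by nlinarith)
  set ε : ℝ := (n:ℝ)/t + α - n with hε
  have hsmall : ∀ R : ℝ, 0 < R → ∀ a : En n, Φ R a ≤ Cp ^ (1/s) * (ENNReal.ofReal R) ^ ε := by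
    intro R hR a
    have hIb : I R a ≤ Cp * ENNReal.ofReal (R ^ ((n:ℝ) + (α - n)*s)) := by
      refine le_trans ?_ (hCp R hR a)
      exact lintegral_mono fun x => ENNReal.ofReal_le_ofReal (brq_kernel_le_near n hγ hs0.le x)
    have h := brq_phi_le n hs0 hR hIb (nt := (n:ℝ)/t)
    rwa [show (n:ℝ)/t + (((n:ℝ) + (α - n)*s) - n)/s = ε by
      rw [hε]; field_simp; ring] at h
  -- large-R bound
  obtain ⟨D, hDtop, β, hβ1, hβ2, hD⟩ := brq_I_large n hn hα0 hαn hγ hs1 hst ht0 hnt hp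
  have hlarge : ∀ R : ℝ, 1 ≤ R → ∀ a : En n, Φ R a ≤ D ^ (1/s) := by
    intro R hR a
    have hR0 : (0:ℝ) < R := lt_of_lt_of_le one_pos hR
    have h := brq_phi_le n hs0 hR0 (hD R hR a) (nt := (n:ℝ)/t)
    refine le_trans h ?_
    have hexp : (n:ℝ)/t + (((n:ℝ) - β) - n)/s ≤ 0 := by
      have he : (((n:ℝ) - β) - n)/s = -(β/s) := by field_simp; ring
      rw [he]; linarith
    calc D ^ (1/s) * (ENNReal.ofReal R) ^ ((n:ℝ)/t + (((n:ℝ) - β) - n)/s)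
        ≤ D ^ (1/s) * (ENNReal.ofReal R) ^ (0:ℝ) :=
          mul_le_mul_right (ENNReal.rpow_le_rpow_of_exponent_le
            (ENNReal.one_le_ofReal.mpr hR) hexp) _
      _ = D ^ (1/s) := by rw [ENNReal.rpow_zero, mul_one]
  -- L finite
  have h1s : (0:ℝ) ≤ 1/s := one_div_nonneg.mpr hs0.le
  have hCs_top : Cp ^ (1/s) ≠ ⊤ := ENNReal.rpow_ne_top_of_nonneg h1s hCpTop
  have hDs_top : D ^ (1/s) ≠ ⊤ := ENNReal.rpow_ne_top_of_nonneg h1s hDtop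
  have hLub : L ≤ max (Cp ^ (1/s)) (D ^ (1/s)) := by
    rw [hL]
    refine iSup_le fun R => iSup_le fun hR => iSup_le fun a => ?_
    rcases le_total R 1 with h1 | h1
    · refine le_trans (hsmall R hR a) (le_trans ?_ (le_max_left _ _))
      have hle1 : (ENNReal.ofReal R) ^ ε ≤ 1 := by
        calc (ENNReal.ofReal R) ^ ε ≤ (1:ℝ≥0∞) ^ ε :=
            ENNReal.rpow_le_rpow (by simpa using ENNReal.ofReal_le_one.mpr h1) hεpos.le
          _ = 1 := ENNReal.one_rpow _
      calc Cp ^ (1/s) * (ENNReal.ofReal R) ^ ε ≤ Cp ^ (1/s) * 1 := mul_le_mul_right hle1 _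
        _ = Cp ^ (1/s) := mul_one _
    · exact le_trans (hlarge R h1 a) (le_max_right _ _)
  have hLtop : L ≠ ⊤ :=
    (lt_of_le_of_lt hLub (max_lt hCs_top.lt_top hDs_top.lt_top)).ne
  -- L positive
  have hI10top : I 1 0 ≠ ⊤ := by
    have hb := le_trans
      (lintegral_mono fun x => ENNReal.ofReal_le_ofReal (brq_kernel_le_near n hγ hs0.le x))
      (hCp 1 one_pos 0)
    exact (lt_of_le_of_lt hb (ENNReal.mul_lt_top hCpTop.lt_top ENNReal.ofReal_lt_top)).ne
  have hΦ10 : Φ 1 0 = (I 1 0) ^ (1/s) := by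
    rw [hΦ]
    simp [Real.one_rpow]
  have hLpos : 0 < L := by
    have h1 : Φ 1 0 ≤ L := by
      rw [hL]
      exact le_iSup_of_le (1:ℝ) (le_iSup_of_le one_pos (le_iSup _ (0 : En n)))
    refine lt_of_lt_of_le ?_ h1
    rw [hΦ10]
    exact ENNReal.rpow_pos (brq_Ipos n hn hαn hγ hs1) hI10top
  -- choose δ
  set Cs' : ℝ≥0∞ := Cp ^ (1/s) + 1 with hCs'
  have hCs'0 : Cs' ≠ 0 := by simp [hCs']
  have hCs'top : Cs' ≠ ⊤ := ENNReal.add_ne_top.mpr ⟨hCs_top, ENNReal.one_ne_top⟩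
  obtain ⟨u, hu0, huL⟩ := exists_between hLpos
  have hutop : u ≠ ⊤ := (huL.trans hLtop.lt_top).ne
  set w : ℝ≥0∞ := (u / Cs') ^ (1/ε) with hw
  have hw0 : w ≠ 0 := by
    rw [hw]
    refine (ENNReal.rpow_pos ?_ ?_).ne'
    · exact ENNReal.div_pos hu0.ne' hCs'top
    · exact (ENNReal.div_lt_top hutop hCs'0).ne
  have hwtop : w ≠ ⊤ := by
    rw [hw]
    exact ENNReal.rpow_ne_top_of_nonneg (one_div_nonneg.mpr hεpos.le)
      (ENNReal.div_lt_top hutop hCs'0).ne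
  set δ : ℝ := min 1 w.toReal with hδ
  have hδ0 : 0 < δ := lt_min one_pos (ENNReal.toReal_pos hw0 hwtop)
  have hδ1 : δ ≤ 1 := min_le_left _ _
  have hδw : ENNReal.ofReal δ ≤ w := by
    calc ENNReal.ofReal δ ≤ ENNReal.ofReal w.toReal :=
        ENNReal.ofReal_le_ofReal (min_le_right _ _)
      _ = w := ENNReal.ofReal_toReal hwtop
  have hkey1 : Cp ^ (1/s) * (ENNReal.ofReal δ) ^ ε ≤ u := by
    have h2 : (ENNReal.ofReal δ) ^ ε ≤ u / Cs' := by
      calc (ENNReal.ofReal δ) ^ ε ≤ w ^ ε := ENNReal.rpow_le_rpow hδw hεpos.le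
        _ = u / Cs' := by
          rw [hw, one_div, ENNReal.rpow_inv_rpow hεpos.ne']
    calc Cp ^ (1/s) * (ENNReal.ofReal δ) ^ ε ≤ Cs' * (u / Cs') :=
        mul_le_mul' le_self_add h2
      _ = u := ENNReal.mul_div_cancel hCs'0 hCs'top
  -- the competitor bound
  set M : ℝ≥0∞ := max u ((ENNReal.ofReal (1 + δ ^ ((n:ℝ)/t₁)))⁻¹ * L) with hM
  have hMlt : M < L := by
    refine max_lt huL ?_
    have hgt1 : 1 < ENNReal.ofReal (1 + δ ^ ((n:ℝ)/t₁)) := by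
      rw [← ENNReal.ofReal_one]
      refine (ENNReal.ofReal_lt_ofReal_iff_of_nonneg (by norm_num)).mpr ?_
      have : 0 < δ ^ ((n:ℝ)/t₁) := Real.rpow_pos_of_pos hδ0 _
      linarith
    calc (ENNReal.ofReal (1 + δ ^ ((n:ℝ)/t₁)))⁻¹ * L < 1 * L :=
        ENNReal.mul_lt_mul_left hLpos.ne' hLtop (ENNReal.inv_lt_one.mpr hgt1)
      _ = L := one_mul _
  rw [hRHSL]
  refine lt_of_le_of_lt ?_ hMlt
  -- LHS ≤ M
  show (⨆ (R : ℝ) (_ : 0 < R) (a : En n),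
    (ENNReal.ofReal ((1 + R ^ ((n:ℝ)/t₁)) * R ^ (-((n:ℝ)/t))))⁻¹ *
      (((ENNReal.ofReal R) ^ (n:ℝ))⁻¹ * I R a) ^ (1/s)) ≤ M
  refine iSup_le fun R => iSup_le fun hR => iSup_le fun a => ?_
  have hRnt1 : (0:ℝ) < 1 + R ^ ((n:ℝ)/t₁) := by
    have := Real.rpow_nonneg hR.le ((n:ℝ)/t₁); linarith
  have hsplit : (ENNReal.ofReal ((1 + R ^ ((n:ℝ)/t₁)) * R ^ (-((n:ℝ)/t))))⁻¹ *
      (((ENNReal.ofReal R) ^ (n:ℝ))⁻¹ * I R a) ^ (1/s)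
      = (ENNReal.ofReal (1 + R ^ ((n:ℝ)/t₁)))⁻¹ * Φ R a := by
    rw [hΦ]
    rw [ENNReal.ofReal_mul hRnt1.le,
      ENNReal.mul_inv (Or.inl (by simp [ENNReal.ofReal_eq_zero, not_le, hRnt1]))
        (Or.inl ENNReal.ofReal_ne_top), mul_assoc]
  rw [hsplit]
  rcases le_total R δ with hc | hc
  · -- small R
    have hinv1 : (ENNReal.ofReal (1 + R ^ ((n:ℝ)/t₁)))⁻¹ ≤ 1 :=
      ENNReal.inv_le_one.mpr (ENNReal.one_le_ofReal.mpr (by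
        have := Real.rpow_nonneg hR.le ((n:ℝ)/t₁); linarith))
    calc (ENNReal.ofReal (1 + R ^ ((n:ℝ)/t₁)))⁻¹ * Φ R a
        ≤ 1 * Φ R a := mul_le_mul_left hinv1 _
      _ = Φ R a := one_mul _
      _ ≤ Cp ^ (1/s) * (ENNReal.ofReal R) ^ ε := hsmall R hR a
      _ ≤ Cp ^ (1/s) * (ENNReal.ofReal δ) ^ ε := by
          exact mul_le_mul_right (ENNReal.rpow_le_rpow (ENNReal.ofReal_le_ofReal hc) hεpos.le) _
      _ ≤ u := hkey1
      _ ≤ M := le_max_left _ _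
  · -- R ≥ δ
    have hΦL : Φ R a ≤ L := by
      rw [hL]
      exact le_iSup_of_le R (le_iSup_of_le hR (le_iSup _ a))
    have hmono : (ENNReal.ofReal (1 + R ^ ((n:ℝ)/t₁)))⁻¹
        ≤ (ENNReal.ofReal (1 + δ ^ ((n:ℝ)/t₁)))⁻¹ := by
      refine ENNReal.inv_le_inv.mpr (ENNReal.ofReal_le_ofReal ?_)
      have := Real.rpow_le_rpow hδ0.le hc hnt10
      linarith
    calc (ENNReal.ofReal (1 + R ^ ((n:ℝ)/t₁)))⁻¹ * Φ R a
        ≤ (ENNReal.ofReal (1 + δ ^ ((n:ℝ)/t₁)))⁻¹ * L := mul_le_mul' hmono hΦL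
      _ ≤ M := le_max_right _ _
end
end
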